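/- arXiv:2207.05327 — 6 statements merged into one kernel-verified Lean document; each statement's English description precedes it below -/
import Mathlib

section
/- Let f : ℝ^d → 𝒴 be any deterministic function into a finite set of classes 𝒴, let μ ∈ ℝ^d and λ₁,…,λ_d > 0, and let ε be a random vector in ℝ^d whose i-th coordinate is an independent Laplace random variable with location μ_i and scale λ_i. Suppose that for a specific x ∈ ℝ^d there exist a class c_A ∈ 𝒴 and reals p_A, p_B ∈ [0,1] such that P(f(x+ε)=c_A) ≥ p_A ≥ p_B ≥ max_{c ≠ c_A} P(f(x+ε)=c). Then for every δ ∈ ℝ^d with ‖δ‖₁ < R, where R = max{ (1/2)·(min_i λ_i)·log(p_A/p_B), −(min_i λ_i)·log(1 − p_A + p_B) }, one has P(f(x+δ+ε)=c_A) > P(f(x+δ+ε)=c) for all c ≠ c_A. -/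
open MeasureTheory ProbabilityTheory


section AuxLaplace

open Real Set Filter Topology
open scoped ENNReal

private lemma aux_integral_exp_neg_mul_Ioi {b : ℝ} (hb : 0 < b) :
    ∫ x in Ioi (0:ℝ), Real.exp (-(b * x)) = b⁻¹ := by
  have hderiv : ∀ x ∈ Ioi (0:ℝ), HasDerivAt (fun x => -b⁻¹ * Real.exp (-(b * x)))
      (Real.exp (-(b * x))) x := by
    intro x _
    have h1 : HasDerivAt (fun x : ℝ => -(b * x)) (-b) x := by
      exact ((hasDerivAt_id x).const_mul b).neg.congr_deriv (by simp)
    have := (h1.exp).const_mul (-b⁻¹)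
    refine this.congr_deriv ?_
    field_simp
  have hint : IntegrableOn (fun x => Real.exp (-(b * x))) (Ioi 0) := by
    simpa [neg_mul] using exp_neg_integrableOn_Ioi 0 hb
  have htend : Tendsto (fun x => -b⁻¹ * Real.exp (-(b * x))) atTop (nhds 0) := by
    have h1 : Tendsto (fun x : ℝ => -(b * x)) atTop atBot := by
      simpa using (tendsto_neg_atBot_iff.mpr ((tendsto_const_mul_atTop_of_pos hb).mpr tendsto_id))
    have := (Real.tendsto_exp_atBot.comp h1).const_mul (-b⁻¹)
    simpa using this
  have hcont : ContinuousWithinAt (fun x => -b⁻¹ * Real.exp (-(b * x))) (Ici 0) 0 :=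
    (Continuous.continuousWithinAt (by continuity))
  have := integral_Ioi_of_hasDerivAt_of_tendsto hcont hderiv hint htend
  rw [this]; simp

end AuxLaplace


/-- The Laplace measure on `ℝ` with location `m` and scale `l`, given by the density
`z ↦ (1/(2l)) · exp(−|z − m|/l)` with respect to Lebesgue measure. -/
noncomputable def laplaceReal (m l : ℝ) : Measure ℝ :=
  volume.withDensity fun z => ENNReal.ofReal ((2 * l)⁻¹ * Real.exp (-|z - m| / l))


section AuxLaplace2

open Real Set Filter Topology
open scoped ENNReal

private lemma aux_measurable_lapDensity (m l : ℝ) :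
    Measurable fun z : ℝ => ENNReal.ofReal ((2 * l)⁻¹ * Real.exp (-|z - m| / l)) := by
  apply Measurable.ennreal_ofReal
  exact (((measurable_id.sub_const m).abs.neg.div_const l).exp.const_mul _)

private lemma aux_integrable_lapDensity {l : ℝ} (hl : 0 < l) (m : ℝ) :
    Integrable (fun z : ℝ => (2 * l)⁻¹ * Real.exp (-|z - m| / l)) := by
  have base : Integrable (fun z : ℝ => (2 * l)⁻¹ * Real.exp (-|z| / l)) := by
    have hIci : IntegrableOn (fun z : ℝ => (2 * l)⁻¹ * Real.exp (-|z| / l)) (Ici 0) := by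
      rw [integrableOn_Ici_iff_integrableOn_Ioi]
      have : IntegrableOn (fun z : ℝ => (2 * l)⁻¹ * Real.exp (-(l⁻¹ * z))) (Ioi 0) := by
        have h : IntegrableOn (fun x => (2 * l)⁻¹ * Real.exp (-l⁻¹ * x)) (Ioi 0) :=
          (exp_neg_integrableOn_Ioi 0 (inv_pos.mpr hl)).const_mul (2 * l)⁻¹
        simpa [neg_mul] using h
      refine this.congr_fun (fun z hz => ?_) measurableSet_Ioi
      rw [abs_of_pos hz]; ring_nf
    have hIic : IntegrableOn (fun z : ℝ => (2 * l)⁻¹ * Real.exp (-|z| / l)) (Iic 0) := by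
      rw [← Measure.map_neg_eq_self (volume : Measure ℝ)]
      have m : MeasurableEmbedding fun x : ℝ => -x := (Homeomorph.neg ℝ).measurableEmbedding
      rw [m.integrableOn_map_iff]
      simp only [Function.comp_def, abs_neg, neg_preimage, neg_Iic, neg_zero]
      exact hIci
    have := hIic.union hIci
    rwa [Iic_union_Ici, integrableOn_univ] at this
  simpa using base.comp_sub_right m

private lemma aux_lintegral_lapDensity {l : ℝ} (hl : 0 < l) (m : ℝ) :
    ∫⁻ z : ℝ, ENNReal.ofReal ((2 * l)⁻¹ * Real.exp (-|z - m| / l)) = 1 := by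
  have hnn : 0 ≤ᵐ[volume] fun z : ℝ => (2 * l)⁻¹ * Real.exp (-|z - m| / l) := by
    filter_upwards with z
    positivity
  rw [← ofReal_integral_eq_lintegral_ofReal (aux_integrable_lapDensity hl m) hnn]
  have h1 : ∫ z : ℝ, (2 * l)⁻¹ * Real.exp (-|z - m| / l)
      = ∫ z : ℝ, (2 * l)⁻¹ * Real.exp (-|z| / l) := by
    exact integral_sub_right_eq_self (fun z => (2 * l)⁻¹ * Real.exp (-|z| / l)) m
  have h2 : ∫ z : ℝ, (2 * l)⁻¹ * Real.exp (-|z| / l)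
      = 2 * ∫ z in Ioi (0:ℝ), (2 * l)⁻¹ * Real.exp (-z / l) :=
    integral_comp_abs (f := fun u => (2 * l)⁻¹ * Real.exp (-u / l))
  have h3 : ∫ z in Ioi (0:ℝ), (2 * l)⁻¹ * Real.exp (-z / l)
      = (2 * l)⁻¹ * ∫ z in Ioi (0:ℝ), Real.exp (-(l⁻¹ * z)) := by
    rw [MeasureTheory.integral_const_mul]
    congr 1
    refine setIntegral_congr_fun measurableSet_Ioi (fun z _ => ?_)
    ring_nf
  rw [h1, h2, h3, aux_integral_exp_neg_mul_Ioi (inv_pos.mpr hl)]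
  rw [show ((2:ℝ) * l)⁻¹ * (l⁻¹)⁻¹ = 2⁻¹ by field_simp]
  norm_num

private lemma aux_laplaceReal_isProbability {l : ℝ} (hl : 0 < l) (m : ℝ) :
    IsProbabilityMeasure (laplaceReal m l) := by
  constructor
  rw [laplaceReal, withDensity_apply _ MeasurableSet.univ, Measure.restrict_univ]
  exact aux_lintegral_lapDensity hl m

private lemma aux_lintegral_pi_prod {n : ℕ} (f : Fin n → ℝ → ℝ≥0∞) (hf : ∀ i, Measurable (f i)) :
    ∫⁻ x : Fin n → ℝ, ∏ i, f i (x i) ∂(Measure.pi fun _ => volume) = ∏ i, ∫⁻ x, f i x := by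
  induction n with
  | zero => simp
  | succ n ih =>
    have h := ((measurePreserving_piFinSuccAbove (fun _ : Fin (n+1) => (volume : Measure ℝ)) 0).symm)
    rw [← h.lintegral_comp_emb (MeasurableEquiv.measurableEmbedding _)]
    simp_rw [MeasurableEquiv.piFinSuccAbove_symm_apply, Fin.insertNthEquiv,
      Fin.prod_univ_succ, Fin.insertNth_zero, Equiv.coe_fn_mk, Fin.cons_succ, Fin.cons_zero,
      cast_eq]
    have hg : Measurable (fun y : Fin n → ℝ => ∏ i : Fin n, f i.succ (y i)) :=
      Finset.measurable_prod Finset.univ fun i _ => (hf i.succ).comp (measurable_pi_apply i)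
    have : ∫⁻ (a : ℝ × (Fin n → ℝ)), f 0 a.1 * ∏ i : Fin n, f i.succ (a.2 i)
        ∂(volume : Measure ℝ).prod (Measure.pi fun _ => volume)
        = (∫⁻ x, f 0 x) * ∫⁻ (y : Fin n → ℝ), ∏ i : Fin n, f i.succ (y i)
          ∂(Measure.pi fun _ => volume) :=
      lintegral_prod_mul ((hf 0).aemeasurable) hg.aemeasurable
    rw [this, ih (fun i => f i.succ) (fun i => hf i.succ)]

private lemma aux_laplace_pi_eq {d : ℕ} (μ lam : Fin d → ℝ) (hlam : ∀ i, 0 < lam i) :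
    Measure.pi (fun i => laplaceReal (μ i) (lam i)) =
      (volume : Measure (Fin d → ℝ)).withDensity
        (fun x => ∏ i, ENNReal.ofReal ((2 * lam i)⁻¹ * Real.exp (-|x i - μ i| / lam i))) := by
  haveI : ∀ i, SigmaFinite (laplaceReal (μ i) (lam i)) :=
    fun i => haveI := aux_laplaceReal_isProbability (hlam i) (μ i); inferInstance
  apply Measure.pi_eq
  intro s hs
  set g : Fin d → ℝ → ℝ≥0∞ :=
    fun i z => ENNReal.ofReal ((2 * lam i)⁻¹ * Real.exp (-|z - μ i| / lam i)) with hg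
  have hgm : ∀ i, Measurable (g i) := fun i => aux_measurable_lapDensity _ _
  rw [withDensity_apply _ (MeasurableSet.univ_pi hs),
    ← lintegral_indicator (MeasurableSet.univ_pi hs)]
  have key : ∀ x : Fin d → ℝ,
      (Set.univ.pi s).indicator (fun x => ∏ i, g i (x i)) x
        = ∏ i, (s i).indicator (g i) (x i) := by
    intro x
    by_cases hx : x ∈ Set.univ.pi s
    · rw [Set.indicator_of_mem hx]
      exact Finset.prod_congr rfl fun i _ => (Set.indicator_of_mem (hx i trivial) _).symm
    · rw [Set.indicator_of_notMem hx]
      have : ∃ i, x i ∉ s i := by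
        by_contra h
        push_neg at h
        exact hx fun i _ => h i
      obtain ⟨i, hi⟩ := this
      exact (Finset.prod_eq_zero (Finset.mem_univ i) (Set.indicator_of_notMem hi _)).symm
  refine (lintegral_congr fun x => key x).trans ?_
  rw [show (volume : Measure (Fin d → ℝ)) = Measure.pi fun _ => volume from volume_pi]
  rw [aux_lintegral_pi_prod _ (fun i => (hgm i).indicator (hs i))]
  exact Finset.prod_congr rfl fun i _ => by
    rw [lintegral_indicator (hs i), laplaceReal, withDensity_apply _ (hs i)]

private lemma aux_laplace_shift_le {d : ℕ} (μ lam : Fin d → ℝ) (hlam : ∀ i, 0 < lam i)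
    (δ : Fin d → ℝ) (S : Set (Fin d → ℝ)) (hS : MeasurableSet S) :
    Measure.pi (fun i => laplaceReal (μ i) (lam i)) ((fun e => δ + e) ⁻¹' S)
      ≤ ENNReal.ofReal (Real.exp (∑ i, |δ i| / lam i)) *
        Measure.pi (fun i => laplaceReal (μ i) (lam i)) S := by
  rw [aux_laplace_pi_eq μ lam hlam]
  set c : ℝ≥0∞ := ENNReal.ofReal (Real.exp (∑ i, |δ i| / lam i)) with hc
  set D : (Fin d → ℝ) → ℝ≥0∞ :=
    fun x => ∏ i, ENNReal.ofReal ((2 * lam i)⁻¹ * Real.exp (-|x i - μ i| / lam i)) with hD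
  have hDm : Measurable D := Finset.measurable_prod _ fun i _ =>
    (aux_measurable_lapDensity (μ i) (lam i)).comp (measurable_pi_apply i)
  have hpre : MeasurableSet ((fun e => δ + e) ⁻¹' S) := (measurable_const_add δ) hS
  have hpt : ∀ y : Fin d → ℝ, D (y - δ) ≤ c * D y := by
    intro y
    have hfac : ∀ i : Fin d, ENNReal.ofReal ((2 * lam i)⁻¹ * Real.exp (-|(y - δ) i - μ i| / lam i))
        ≤ ENNReal.ofReal (Real.exp (|δ i| / lam i)) *
          ENNReal.ofReal ((2 * lam i)⁻¹ * Real.exp (-|y i - μ i| / lam i)) := by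
      intro i
      rw [← ENNReal.ofReal_mul (le_of_lt (Real.exp_pos _))]
      apply ENNReal.ofReal_le_ofReal
      rw [show Real.exp (|δ i| / lam i) * ((2 * lam i)⁻¹ * Real.exp (-|y i - μ i| / lam i))
          = (2 * lam i)⁻¹ * (Real.exp (|δ i| / lam i) * Real.exp (-|y i - μ i| / lam i)) by ring,
        ← Real.exp_add]
      have hli := hlam i
      have h2l : (0:ℝ) ≤ (2 * lam i)⁻¹ := by positivity
      apply mul_le_mul_of_nonneg_left _ h2l
      apply Real.exp_le_exp.mpr
      rw [Pi.sub_apply, ← add_div]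
      have h1 : |y i - μ i| ≤ |y i - δ i - μ i| + |δ i| := by
        have h := abs_add_le (y i - δ i - μ i) (δ i)
        have he : y i - δ i - μ i + δ i = y i - μ i := by ring
        rwa [he] at h
      gcongr
      linarith [h1]
    calc D (y - δ) ≤ ∏ i, (ENNReal.ofReal (Real.exp (|δ i| / lam i)) *
          ENNReal.ofReal ((2 * lam i)⁻¹ * Real.exp (-|y i - μ i| / lam i))) :=
        Finset.prod_le_prod' fun i _ => hfac i
      _ = (∏ i, ENNReal.ofReal (Real.exp (|δ i| / lam i))) * D y := Finset.prod_mul_distrib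
      _ = c * D y := by
        rw [← ENNReal.ofReal_prod_of_nonneg (fun i _ => le_of_lt (Real.exp_pos _)),
          ← Real.exp_sum]
  rw [withDensity_apply _ hpre, withDensity_apply _ hS,
    ← lintegral_indicator hpre, ← lintegral_indicator hS]
  have step1 : ∫⁻ x, ((fun e => δ + e) ⁻¹' S).indicator D x
      = ∫⁻ y, S.indicator (fun y => D (y - δ)) y := by
    rw [← lintegral_add_left_eq_self (fun y => S.indicator (fun y => D (y - δ)) y) δ]
    congr 1; funext x
    by_cases hx : δ + x ∈ S
    · rw [Set.indicator_of_mem (show x ∈ (fun e => δ + e) ⁻¹' S from hx),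
        Set.indicator_of_mem hx]
      congr 1
      simp
    · rw [Set.indicator_of_notMem (show x ∉ (fun e => δ + e) ⁻¹' S from hx),
        Set.indicator_of_notMem hx]
  rw [step1]
  calc ∫⁻ y, S.indicator (fun y => D (y - δ)) y ≤ ∫⁻ y, S.indicator (fun y => c * D y) y := by
        apply lintegral_mono
        intro y
        by_cases hy : y ∈ S
        · rw [Set.indicator_of_mem hy, Set.indicator_of_mem hy]; exact hpt y
        · rw [Set.indicator_of_notMem hy, Set.indicator_of_notMem hy]
    _ = ∫⁻ y, c * S.indicator D y := by
        congr 1; funext y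
        by_cases hy : y ∈ S
        · rw [Set.indicator_of_mem hy, Set.indicator_of_mem hy]
        · rw [Set.indicator_of_notMem hy, Set.indicator_of_notMem hy, mul_zero]
    _ = c * ∫⁻ y, S.indicator D y := lintegral_const_mul c (hDm.indicator hS)

end AuxLaplace2


/-- Randomized smoothing with anisotropic Laplace noise. -/
theorem anisotropic_randomized_smoothing_laplace
    {d : ℕ} (hd : 0 < d) {Y : Type*} [Fintype Y] [MeasurableSpace Y] [MeasurableSingletonClass Y]
    (f : (Fin d → ℝ) → Y) (hf : Measurable f)
    (μ : Fin d → ℝ) (lam : Fin d → ℝ) (hlam : ∀ i, 0 < lam i)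
    (noise : Measure (Fin d → ℝ))
    (hnoise : noise = Measure.pi fun i : Fin d => laplaceReal (μ i) (lam i))
    (x : Fin d → ℝ) (cA : Y) (pA pB : ℝ)
    (hpA : pA ∈ Set.Icc (0 : ℝ) 1) (hpB : pB ∈ Set.Icc (0 : ℝ) 1)
    (hA : (noise {e | f (x + e) = cA}).toReal ≥ pA)
    (hAB : pA ≥ pB)
    (hB : ∀ c : Y, c ≠ cA → pB ≥ (noise {e | f (x + e) = c}).toReal)
    (δ : Fin d → ℝ)
    (hδ : (∑ i, |δ i|) <
      max ((1 / 2) * (Finset.univ.inf' ⟨⟨0, hd⟩, Finset.mem_univ _⟩ lam) * Real.log (pA / pB))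
        (-(Finset.univ.inf' ⟨⟨0, hd⟩, Finset.mem_univ _⟩ lam) * Real.log (1 - pA + pB))) :
    ∀ c : Y, c ≠ cA →
      (noise {e | f (x + δ + e) = cA}).toReal >
        (noise {e | f (x + δ + e) = c}).toReal := by
  intro c hcA
  subst hnoise
  set N := Measure.pi fun i : Fin d => laplaceReal (μ i) (lam i) with hN
  haveI hprob : ∀ i : Fin d, IsProbabilityMeasure (laplaceReal (μ i) (lam i)) :=
    fun i => aux_laplaceReal_isProbability (hlam i) (μ i)
  haveI : IsProbabilityMeasure N := by rw [hN]; infer_instance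
  -- basic sets
  have hx : Measurable fun e : Fin d → ℝ => x + e := measurable_const_add x
  have hSm : ∀ b : Y, MeasurableSet {e : Fin d → ℝ | f (x + e) = b} :=
    fun b => (hf.comp hx) (measurableSet_singleton b)
  have hset : ∀ b : Y, {e : Fin d → ℝ | f (x + δ + e) = b}
      = (fun e => δ + e) ⁻¹' {e : Fin d → ℝ | f (x + e) = b} := by
    intro b
    ext e
    simp only [Set.mem_setOf_eq, Set.mem_preimage, add_assoc]
  -- the exponential factor
  set t : ℝ := ∑ i, |δ i| / lam i with ht
  set cexp : ℝ := Real.exp t with hcexp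
  have hcpos : 0 < cexp := Real.exp_pos t
  -- toReal bounds
  have toReal_le_one : ∀ S : Set (Fin d → ℝ), (N S).toReal ≤ 1 := by
    intro S
    simpa using ENNReal.toReal_mono ENNReal.one_ne_top prob_le_one
  have key_up : ∀ S : Set (Fin d → ℝ), MeasurableSet S →
      (N ((fun e => δ + e) ⁻¹' S)).toReal ≤ cexp * (N S).toReal := by
    intro S hS
    have h := aux_laplace_shift_le μ lam hlam δ S hS
    have hfin : ENNReal.ofReal (Real.exp (∑ i, |δ i| / lam i)) * N S ≠ ⊤ :=
      ENNReal.mul_ne_top ENNReal.ofReal_ne_top (measure_ne_top _ _)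
    have := ENNReal.toReal_mono hfin h
    rwa [ENNReal.toReal_mul, ENNReal.toReal_ofReal (Real.exp_nonneg _)] at this
  have key_dn : ∀ S : Set (Fin d → ℝ), MeasurableSet S →
      (N S).toReal ≤ cexp * (N ((fun e => δ + e) ⁻¹' S)).toReal := by
    intro S hS
    have hpre : MeasurableSet ((fun e => δ + e) ⁻¹' S) := (measurable_const_add δ) hS
    have h := aux_laplace_shift_le μ lam hlam (-δ) ((fun e => δ + e) ⁻¹' S) hpre
    have hsum : (∑ i, |(-δ) i| / lam i) = t := by
      rw [ht]
      exact Finset.sum_congr rfl fun i _ => by rw [Pi.neg_apply, abs_neg]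
    have hsets : (fun e => -δ + e) ⁻¹' ((fun e => δ + e) ⁻¹' S) = S := by
      ext e
      simp [Set.mem_preimage]
    rw [hsum, hsets] at h
    have hfin : ENNReal.ofReal cexp * N ((fun e => δ + e) ⁻¹' S) ≠ ⊤ :=
      ENNReal.mul_ne_top ENNReal.ofReal_ne_top (measure_ne_top _ _)
    have := ENNReal.toReal_mono hfin h
    rwa [ENNReal.toReal_mul, ENNReal.toReal_ofReal (Real.exp_nonneg _)] at this
  have compl_toReal : ∀ S : Set (Fin d → ℝ), MeasurableSet S →
      (N Sᶜ).toReal = 1 - (N S).toReal := by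
    intro S hS
    rw [measure_compl hS (measure_ne_top _ _), measure_univ,
      ENNReal.toReal_sub_of_le prob_le_one ENNReal.one_ne_top, ENNReal.toReal_one]
  -- lambda min
  set L : ℝ := Finset.univ.inf' ⟨⟨0, hd⟩, Finset.mem_univ _⟩ lam with hLdef
  have hL : 0 < L := by
    rw [hLdef]
    exact (Finset.lt_inf'_iff _).mpr fun i _ => hlam i
  have hLle : ∀ i, L ≤ lam i := fun i => Finset.inf'_le lam (Finset.mem_univ i)
  have hT0 : 0 ≤ ∑ i, |δ i| := Finset.sum_nonneg fun i _ => abs_nonneg _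
  have htle : t ≤ (∑ i, |δ i|) / L := by
    rw [ht, Finset.sum_div]
    refine Finset.sum_le_sum fun i _ => ?_
    apply div_le_div_of_nonneg_left (abs_nonneg _) hL (hLle i)
  -- abbreviations
  set SA := {e : Fin d → ℝ | f (x + e) = cA} with hSA
  set SC := {e : Fin d → ℝ | f (x + e) = c} with hSC
  have hCle : (N SC).toReal ≤ pB := hB c hcA
  have e1 : (N ((fun e => δ + e) ⁻¹' SC)).toReal ≤ cexp * pB := by
    calc (N ((fun e => δ + e) ⁻¹' SC)).toReal ≤ cexp * (N SC).toReal := key_up SC (hSm c)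
      _ ≤ cexp * pB := by
        apply mul_le_mul_of_nonneg_left hCle (le_of_lt hcpos)
  have e2 : pA ≤ cexp * (N ((fun e => δ + e) ⁻¹' SA)).toReal :=
    le_trans hA (key_dn SA (hSm cA))
  have e3 : 1 - cexp * (1 - pA) ≤ (N ((fun e => δ + e) ⁻¹' SA)).toReal := by
    have hpreA : MeasurableSet ((fun e => δ + e) ⁻¹' SA) := (measurable_const_add δ) (hSm cA)
    have hcompl : ((fun e => δ + e) ⁻¹' SA)ᶜ = (fun e => δ + e) ⁻¹' (SAᶜ) := by
      rw [Set.preimage_compl]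
    have h1 : (N (((fun e => δ + e) ⁻¹' SA)ᶜ)).toReal ≤ cexp * (N (SAᶜ)).toReal := by
      rw [hcompl]
      exact key_up (SAᶜ) (hSm cA).compl
    have h2 : (N (SAᶜ)).toReal = 1 - (N SA).toReal := compl_toReal SA (hSm cA)
    have h3 : (N (((fun e => δ + e) ⁻¹' SA)ᶜ)).toReal
        = 1 - (N ((fun e => δ + e) ⁻¹' SA)).toReal := compl_toReal _ hpreA
    have h4 : (N SA).toReal ≥ pA := hA
    nlinarith [hcpos]
  rw [hset cA, hset c, ← hSA, ← hSC]
  rcases lt_max_iff.mp hδ with h | h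
  · -- case 1 : robust radius via log (pA / pB)
    have hlogpos : 0 < Real.log (pA / pB) := by
      by_contra hlp
      push_neg at hlp
      have : (1:ℝ) / 2 * L * Real.log (pA / pB) ≤ 0 := by nlinarith
      linarith
    have hpBpos : 0 < pB := by
      rcases lt_or_eq_of_le hpB.1 with h' | h'
      · exact h'
      · exfalso
        rw [← h', div_zero, Real.log_zero] at hlogpos
        exact lt_irrefl 0 hlogpos
    have hpApos : 0 < pA := lt_of_lt_of_le hpBpos hAB
    have hratio : 0 < pA / pB := div_pos hpApos hpBpos
    have ht2 : t < 1 / 2 * Real.log (pA / pB) := by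
      have hdiv : (∑ i, |δ i|) / L < 1 / 2 * Real.log (pA / pB) := by
        rw [div_lt_iff₀ hL]
        nlinarith
      exact lt_of_le_of_lt htle hdiv
    have hexp2 : cexp * cexp * pB < pA := by
      have h2 : Real.exp (t + t) < pA / pB := by
        rw [← Real.exp_log hratio]
        apply Real.exp_lt_exp.mpr
        linarith
      rw [Real.exp_add] at h2
      have := (lt_div_iff₀ hpBpos).mp h2
      linarith [this]
    have hTA := e2
    have hTC := e1
    nlinarith [hcpos, hTA, hTC, hexp2,
      ENNReal.toReal_nonneg (a := N ((fun e => δ + e) ⁻¹' SC))]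
  · -- case 2 : robust radius via log (1 - pA + pB)
    have hq0 : 0 ≤ 1 - pA + pB := by
      have := hpA.2; have := hpB.1; linarith
    have hlogneg : Real.log (1 - pA + pB) < 0 := by
      by_contra hlp
      push_neg at hlp
      have : -L * Real.log (1 - pA + pB) ≤ 0 := by nlinarith
      linarith
    have hqpos : 0 < 1 - pA + pB := by
      rcases lt_or_eq_of_le hq0 with h' | h'
      · exact h'
      · exfalso
        rw [← h', Real.log_zero] at hlogneg
        exact lt_irrefl 0 hlogneg
    have ht2 : t < -Real.log (1 - pA + pB) := by
      have hdiv : (∑ i, |δ i|) / L < -Real.log (1 - pA + pB) := by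
        rw [div_lt_iff₀ hL]
        nlinarith
      exact lt_of_le_of_lt htle hdiv
    have hcq : cexp * (1 - pA + pB) < 1 := by
      have hlt : cexp < (1 - pA + pB)⁻¹ := by
        rw [hcexp, ← Real.exp_log hqpos, ← Real.exp_neg]
        exact Real.exp_lt_exp.mpr ht2
      calc cexp * (1 - pA + pB) < (1 - pA + pB)⁻¹ * (1 - pA + pB) :=
            mul_lt_mul_of_pos_right hlt hqpos
        _ = 1 := inv_mul_cancel₀ (ne_of_gt hqpos)
    have hexpand : cexp * (1 - pA + pB) = cexp * (1 - pA) + cexp * pB := by ring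
    linarith [e1, e3, hcq, hexpand.symm.le, hexpand.le]
end

section
/- (Neyman–Pearson for anisotropic Gaussians, part 1) Let x, μ, δ ∈ ℝ^d and σ₁,…,σ_d > 0. Let X be a random vector whose i-th coordinate is an independent Gaussian N(x_i + μ_i, σ_i²) and Y a random vector whose i-th coordinate is an independent Gaussian N(x_i + μ_i + δ_i, σ_i²). Let h : ℝ^d → {0,1} be any deterministic measurable function. If S = { z ∈ ℝ^d : Σ_{i=1}^d (δ_i/σ_i²)·z_i ≤ β } for some β ∈ ℝ and P(h(X)=1) ≥ P(X ∈ S), then P(h(Y)=1) ≥ P(Y ∈ S). -/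
open MeasureTheory ProbabilityTheory

lemma my_lintegral_fin_prod {n : ℕ} (ν : Fin n → Measure ℝ) [∀ i, IsProbabilityMeasure (ν i)]
    (f : Fin n → ℝ → ENNReal) (hf : ∀ i, Measurable (f i)) :
    ∫⁻ z, ∏ i, f i (z i) ∂Measure.pi ν = ∏ i, ∫⁻ t, f i t ∂ν i := by
  induction n with
  | zero =>
      simp only [Finset.univ_eq_empty, Finset.prod_empty, lintegral_one]
      simp [Measure.pi_univ]
  | succ n ih =>
      have hmp := measurePreserving_piFinSuccAbove ν 0
      have hg : Measurable fun y : ℝ × (Fin n → ℝ) =>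
          f 0 y.1 * ∏ j, f (Fin.succ j) (y.2 j) := by
        refine ((hf 0).comp measurable_fst).mul ?_
        exact Finset.measurable_prod _ fun j _ =>
          (hf _).comp ((measurable_pi_apply j).comp measurable_snd)
      calc ∫⁻ z, ∏ i, f i (z i) ∂Measure.pi ν
          = ∫⁻ y : ℝ × (Fin n → ℝ), f 0 y.1 * (fun w => ∏ j, f (Fin.succ j) (w j)) y.2
            ∂((ν 0).prod (Measure.pi fun j => ν (Fin.succAbove 0 j))) := by
            rw [← hmp.lintegral_comp hg]
            refine lintegral_congr fun z => ?_
            simp [MeasurableEquiv.piFinSuccAbove_apply, Fin.prod_univ_succ, Fin.zero_succAbove,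
              Fin.tail]
        _ = (∫⁻ t, f 0 t ∂ν 0) * ∏ j, ∫⁻ t, f (Fin.succ j) t ∂ν (Fin.succ j) := by
            have hg2 : Measurable fun w : Fin n → ℝ => ∏ j, f (Fin.succ j) (w j) :=
              Finset.measurable_prod _ fun j _ => (hf _).comp (measurable_pi_apply j)
            have key := lintegral_prod_mul (μ := ν 0)
              (ν := Measure.pi fun j => ν (Fin.succAbove 0 j)) (f := f 0)
              (g := fun w => ∏ j, f (Fin.succ j) (w j))
              (hf 0).aemeasurable hg2.aemeasurable
            rw [key]
            congr 1
            simp only [Fin.zero_succAbove]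
            exact ih (fun j => ν (Fin.succ j)) (fun j => f (Fin.succ j)) (fun j => hf _)
        _ = ∏ i, ∫⁻ t, f i t ∂ν i := by rw [Fin.prod_univ_succ]

lemma my_pi_withDensity {n : ℕ} (ν ν' : Fin n → Measure ℝ)
    [∀ i, IsProbabilityMeasure (ν i)] [∀ i, IsProbabilityMeasure (ν' i)]
    (f : Fin n → ℝ → ENNReal) (hf : ∀ i, Measurable (f i))
    (hwd : ∀ i, (ν i).withDensity (f i) = ν' i) :
    (Measure.pi ν).withDensity (fun z => ∏ i, f i (z i)) = Measure.pi ν' := by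
  refine (Measure.pi_eq fun s hs => ?_).symm
  have hgm : Measurable fun z : Fin n → ℝ => ∏ i, f i (z i) :=
    Finset.measurable_prod _ fun i _ => (hf i).comp (measurable_pi_apply i)
  rw [withDensity_apply _ (MeasurableSet.univ_pi hs),
    ← lintegral_indicator (MeasurableSet.univ_pi hs)]
  have hind : ∀ z, (Set.univ.pi s).indicator (fun z => ∏ i, f i (z i)) z
      = ∏ i, (s i).indicator (f i) (z i) := by
    intro z
    by_cases hz : z ∈ Set.univ.pi s
    · rw [Set.indicator_of_mem hz]
      exact Finset.prod_congr rfl fun i _ =>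
        (Set.indicator_of_mem (hz i (Set.mem_univ i)) _).symm
    · rw [Set.indicator_of_notMem hz]
      rw [Set.mem_univ_pi] at hz
      push_neg at hz
      obtain ⟨i, hi⟩ := hz
      exact (Finset.prod_eq_zero (Finset.mem_univ i)
        (Set.indicator_of_notMem hi _)).symm
  simp_rw [hind]
  rw [my_lintegral_fin_prod ν _ (fun i => (hf i).indicator (hs i))]
  refine Finset.prod_congr rfl fun i _ => ?_
  rw [lintegral_indicator (hs i), ← withDensity_apply _ (hs i), hwd i]

lemma my_gaussian_tilt (m dd s : ℝ) (hs : 0 < s) :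
    (gaussianReal m (s ^ 2).toNNReal).withDensity
      (fun t => ENNReal.ofReal (Real.exp (dd / s ^ 2 * t + (dd * (-m) / s ^ 2 - dd ^ 2 / (2 * s ^ 2)))))
      = gaussianReal (m + dd) (s ^ 2).toNNReal := by
  have hv : (s ^ 2).toNNReal ≠ 0 := by
    simp only [ne_eq, Real.toNNReal_eq_zero, not_le]
    positivity
  rw [gaussianReal_of_var_ne_zero _ hv, gaussianReal_of_var_ne_zero _ hv,
    ← withDensity_mul _ (measurable_gaussianPDF _ _)
      (by fun_prop)]
  congr 1
  funext t
  have hvr : ((s ^ 2).toNNReal : ℝ) = s ^ 2 := Real.coe_toNNReal _ (by positivity)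
  simp only [gaussianPDF, Pi.mul_apply]
  rw [← ENNReal.ofReal_mul (gaussianPDFReal_nonneg _ _ _)]
  congr 1
  simp only [gaussianPDFReal, hvr]
  rw [mul_assoc, ← Real.exp_add]
  congr 1
  have hs2 : s ^ 2 ≠ 0 := by positivity
  field_simp
  ring

/-- Neyman–Pearson for anisotropic Gaussians, part 1. -/
theorem neyman_pearson_gaussian_one
    {d : ℕ} (x μ δ : Fin d → ℝ) (σ : Fin d → ℝ) (hσ : ∀ i, 0 < σ i)
    (μX μY : Measure (Fin d → ℝ))
    (hμX : μX = Measure.pi fun i : Fin d => gaussianReal (x i + μ i) ((σ i ^ 2).toNNReal))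
    (hμY : μY = Measure.pi fun i : Fin d => gaussianReal (x i + μ i + δ i) ((σ i ^ 2).toNNReal))
    (h : (Fin d → ℝ) → Bool) (hh : Measurable h)
    (β : ℝ) (S : Set (Fin d → ℝ))
    (hS : S = {z | ∑ i, δ i / σ i ^ 2 * z i ≤ β})
    (hcond : μX {z | h z = true} ≥ μX S) :
    μY {z | h z = true} ≥ μY S := by
  subst hμX hμY hS
  set μX := Measure.pi fun i : Fin d => gaussianReal (x i + μ i) ((σ i ^ 2).toNNReal) with hμX
  set μY := Measure.pi fun i : Fin d => gaussianReal (x i + μ i + δ i) ((σ i ^ 2).toNNReal)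
    with hμY
  set T : Set (Fin d → ℝ) := {z | h z = true} with hT
  set S : Set (Fin d → ℝ) := {z | ∑ i, δ i / σ i ^ 2 * z i ≤ β} with hS
  -- densities
  set e : Fin d → ℝ → ℝ := fun i t =>
    δ i / σ i ^ 2 * t + (δ i * (-(x i + μ i)) / σ i ^ 2 - δ i ^ 2 / (2 * σ i ^ 2)) with he
  set f : Fin d → ℝ → ENNReal := fun i t => ENNReal.ofReal (Real.exp (e i t)) with hf
  have hfm : ∀ i, Measurable (f i) := by
    intro i; fun_prop
  set c : ℝ := ∑ i, (δ i * (-(x i + μ i)) / σ i ^ 2 - δ i ^ 2 / (2 * σ i ^ 2)) with hc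
  set g : (Fin d → ℝ) → ENNReal := fun z => ∏ i, f i (z i) with hg
  have hgm : Measurable g :=
    Finset.measurable_prod _ fun i _ => (hfm i).comp (measurable_pi_apply i)
  have hμYX : μY = μX.withDensity g := by
    rw [hμY, hμX]
    refine (my_pi_withDensity _ _ f hfm fun i => ?_).symm
    exact my_gaussian_tilt (x i + μ i) (δ i) (σ i) (hσ i)
  have hL : Measurable fun z : Fin d → ℝ => ∑ i, δ i / σ i ^ 2 * z i :=
    Finset.measurable_sum _ fun i _ => (measurable_pi_apply i).const_mul _
  have hSm : MeasurableSet S := measurableSet_le hL measurable_const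
  have hTm : MeasurableSet T := hh (MeasurableSet.singleton true)
  have hgval : ∀ z, g z = ENNReal.ofReal (Real.exp ((∑ i, δ i / σ i ^ 2 * z i) + c)) := by
    intro z
    simp only [hg, hf, he, hc]
    rw [← Finset.sum_add_distrib, Real.exp_sum,
      ← ENNReal.ofReal_prod_of_nonneg fun i _ => (Real.exp_pos _).le]
  set k : ENNReal := ENNReal.ofReal (Real.exp (β + c)) with hk
  have hupper : ∀ A : Set (Fin d → ℝ), MeasurableSet A → A ⊆ S → μY A ≤ k * μX A := by
    intro A hA hAS
    rw [hμYX, withDensity_apply _ hA]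
    calc ∫⁻ z in A, g z ∂μX ≤ ∫⁻ _ in A, k ∂μX := by
          refine setLIntegral_mono measurable_const fun z hz => ?_
          rw [hgval z, hk]
          exact ENNReal.ofReal_le_ofReal (Real.exp_le_exp.mpr (by
            have := hAS hz; simp only [hS, Set.mem_setOf_eq] at this; linarith))
      _ = k * μX A := setLIntegral_const A k
  have hlower : ∀ A : Set (Fin d → ℝ), MeasurableSet A → A ⊆ Sᶜ → k * μX A ≤ μY A := by
    intro A hA hAS
    rw [hμYX, withDensity_apply _ hA]
    calc k * μX A = ∫⁻ _ in A, k ∂μX := (setLIntegral_const A k).symm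
      _ ≤ ∫⁻ z in A, g z ∂μX := by
          refine setLIntegral_mono hgm fun z hz => ?_
          rw [hgval z, hk]
          refine ENNReal.ofReal_le_ofReal (Real.exp_le_exp.mpr ?_)
          have := hAS hz
          simp only [hS, Set.mem_compl_iff, Set.mem_setOf_eq, not_le] at this
          linarith
  have hX1 : μX (T ∩ S) + μX (T \ S) = μX T := measure_inter_add_diff T hSm
  have hX2 : μX (S ∩ T) + μX (S \ T) = μX S := measure_inter_add_diff S hTm
  have hY1 : μY (T ∩ S) + μY (T \ S) = μY T := measure_inter_add_diff T hSm
  have hY2 : μY (S ∩ T) + μY (S \ T) = μY S := measure_inter_add_diff S hTm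
  have hdiff : μX (S \ T) ≤ μX (T \ S) := by
    have hsum : μX (T ∩ S) + μX (S \ T) ≤ μX (T ∩ S) + μX (T \ S) := by
      rw [hX1]
      calc μX (T ∩ S) + μX (S \ T) = μX (S ∩ T) + μX (S \ T) := by rw [Set.inter_comm]
        _ = μX S := hX2
        _ ≤ μX T := hcond
    exact (ENNReal.add_le_add_iff_left (measure_ne_top μX _)).mp hsum
  calc μY S = μY (S ∩ T) + μY (S \ T) := hY2.symm
    _ ≤ μY (S ∩ T) + k * μX (S \ T) :=
        add_le_add le_rfl (hupper _ (hSm.diff hTm) Set.diff_subset)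
    _ ≤ μY (S ∩ T) + k * μX (T \ S) :=
        add_le_add le_rfl (mul_le_mul' le_rfl hdiff)
    _ ≤ μY (S ∩ T) + μY (T \ S) :=
        add_le_add le_rfl (hlower _ (hTm.diff hSm) (Set.diff_subset_compl _ _))
    _ = μY (T ∩ S) + μY (T \ S) := by rw [Set.inter_comm]
    _ = μY T := hY1
end

section
/- (Neyman–Pearson for anisotropic Gaussians, part 2) Let x, μ, δ ∈ ℝ^d and σ₁,…,σ_d > 0. Let X be a random vector whose i-th coordinate is an independent Gaussian N(x_i + μ_i, σ_i²) and Y a random vector whose i-th coordinate is an independent Gaussian N(x_i + μ_i + δ_i, σ_i²). Let h : ℝ^d → {0,1} be any deterministic measurable function. If S = { z ∈ ℝ^d : Σ_{i=1}^d (δ_i/σ_i²)·z_i ≥ β } for some β ∈ ℝ and P(h(X)=1) ≤ P(X ∈ S), then P(h(Y)=1) ≤ P(Y ∈ S). -/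
open MeasureTheory ProbabilityTheory Real
open scoped ENNReal NNReal

lemma np_lintegral_pi_prod : ∀ (n : ℕ) (ν : Fin n → Measure ℝ) [∀ i, SigmaFinite (ν i)]
    (f : Fin n → ℝ → ℝ≥0∞), (∀ i, Measurable (f i)) →
    ∫⁻ z, ∏ i, f i (z i) ∂Measure.pi ν = ∏ i, ∫⁻ y, f i y ∂ν i
  | 0, ν, _, f, hf => by
    simp [lintegral_one]
  | (n+1), ν, _, f, hf => by
    have hmp := (measurePreserving_piFinSuccAbove ν 0).symm
    have hF : Measurable fun z : Fin (n+1) → ℝ => ∏ i, f i (z i) :=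
      Finset.measurable_prod _ fun i _ => (hf i).comp (measurable_pi_apply i)
    rw [← hmp.lintegral_comp hF]
    simp_rw [MeasurableEquiv.piFinSuccAbove_symm_apply, Fin.insertNthEquiv,
      Fin.prod_univ_succ, Fin.insertNth_zero]
    simp only [Fin.zero_succAbove, Function.comp_def, Fin.cons_zero, Fin.cons_succ, cast_eq,
      Equiv.coe_fn_mk]
    have key := lintegral_prod_mul (μ := ν 0) (ν := Measure.pi fun j => ν j.succ)
      (f := f 0) (g := fun w : Fin n → ℝ => ∏ j, f j.succ (w j)) (hf 0).aemeasurable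
      (Finset.measurable_prod _ fun i _ => (hf _).comp (measurable_pi_apply i)).aemeasurable
    rw [key]
    rw [np_lintegral_pi_prod n _ _ fun i => hf _]

lemma np_pi_withDensity {n : ℕ} (ν : Fin n → Measure ℝ) [∀ i, SigmaFinite (ν i)]
    (f : Fin n → ℝ → ℝ≥0∞) (hf : ∀ i, Measurable (f i))
    (sf : ∀ i, SigmaFinite ((ν i).withDensity (f i))) :
    Measure.pi (fun i => (ν i).withDensity (f i)) =
      (Measure.pi ν).withDensity (fun z => ∏ i, f i (z i)) := by
  haveI := sf
  refine Measure.pi_eq fun s hs => ?_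
  rw [withDensity_apply _ (MeasurableSet.univ_pi hs),
    ← lintegral_indicator (MeasurableSet.univ_pi hs)]
  have hind : ∀ z : Fin n → ℝ, (Set.pi Set.univ s).indicator
      (fun z => ∏ i, f i (z i)) z = ∏ i, (s i).indicator (f i) (z i) := by
    intro z
    by_cases hz : z ∈ Set.pi Set.univ s
    · rw [Set.indicator_of_mem hz]
      exact Finset.prod_congr rfl fun i _ =>
        (Set.indicator_of_mem (hz i (Set.mem_univ i)) _).symm
    · rw [Set.indicator_of_notMem hz]
      have hex : ∃ i, z i ∉ s i := by simpa [Set.mem_pi] using hz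
      obtain ⟨i, hi⟩ := hex
      exact (Finset.prod_eq_zero (Finset.mem_univ i)
        (Set.indicator_of_notMem hi _)).symm
  simp_rw [hind]
  rw [np_lintegral_pi_prod n ν _ fun i => (hf i).indicator (hs i)]
  exact Finset.prod_congr rfl fun i _ => by
    rw [lintegral_indicator (hs i), withDensity_apply _ (hs i)]

lemma np_pdf_shift (m dl s w : ℝ) (hs : 0 < s) :
    gaussianPDFReal (m + dl) (s ^ 2).toNNReal w =
      Real.exp (dl / s ^ 2 * w - (dl * m / s ^ 2 + dl ^ 2 / (2 * s ^ 2))) *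
        gaussianPDFReal m (s ^ 2).toNNReal w := by
  have hc : (((s ^ 2).toNNReal : ℝ≥0) : ℝ) = s ^ 2 := Real.coe_toNNReal _ (sq_nonneg s)
  have hs2 : (0:ℝ) < s ^ 2 := by positivity
  rw [gaussianPDFReal, gaussianPDFReal, hc]
  rw [mul_left_comm, ← Real.exp_add]
  congr 1
  field_simp
  ring


/-- Neyman–Pearson for anisotropic Gaussians, part 2. -/
theorem neyman_pearson_gaussian_two
    {d : ℕ} (x μ δ : Fin d → ℝ) (σ : Fin d → ℝ) (hσ : ∀ i, 0 < σ i)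
    (μX μY : Measure (Fin d → ℝ))
    (hμX : μX = Measure.pi fun i : Fin d => gaussianReal (x i + μ i) ((σ i ^ 2).toNNReal))
    (hμY : μY = Measure.pi fun i : Fin d => gaussianReal (x i + μ i + δ i) ((σ i ^ 2).toNNReal))
    (h : (Fin d → ℝ) → Bool) (hh : Measurable h)
    (β : ℝ) (S : Set (Fin d → ℝ))
    (hS : S = {z | ∑ i, δ i / σ i ^ 2 * z i ≥ β})
    (hcond : μX {z | h z = true} ≤ μX S) :
    μY {z | h z = true} ≤ μY S := by
  have hm : ∀ i, ((σ i ^ 2).toNNReal : ℝ≥0) ≠ 0 := fun i => by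
    simp only [ne_eq, Real.toNNReal_eq_zero, not_le]
    exact pow_pos (hσ i) 2
  haveI hpX : IsProbabilityMeasure μX := by rw [hμX]; infer_instance
  set lam : Measure (Fin d → ℝ) := Measure.pi fun _ : Fin d => (volume : Measure ℝ) with hlam
  set P : (Fin d → ℝ) → ℝ≥0∞ :=
    fun z => ∏ i, gaussianPDF (x i + μ i) ((σ i ^ 2).toNNReal) (z i) with hPdef
  set Q : (Fin d → ℝ) → ℝ≥0∞ :=
    fun z => ∏ i, gaussianPDF (x i + μ i + δ i) ((σ i ^ 2).toNNReal) (z i) with hQdef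
  have hPm : Measurable P :=
    Finset.measurable_prod _ fun i _ => (measurable_gaussianPDF _ _).comp (measurable_pi_apply i)
  have hQm : Measurable Q :=
    Finset.measurable_prod _ fun i _ => (measurable_gaussianPDF _ _).comp (measurable_pi_apply i)
  have hXd : μX = lam.withDensity P := by
    rw [hμX]
    have he : (fun i : Fin d => gaussianReal (x i + μ i) ((σ i ^ 2).toNNReal))
        = fun i => (volume : Measure ℝ).withDensity (gaussianPDF (x i + μ i) ((σ i ^ 2).toNNReal)) :=
      funext fun i => gaussianReal_of_var_ne_zero _ (hm i)
    rw [he, np_pi_withDensity _ _ (fun i => measurable_gaussianPDF _ _) (fun i => by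
      rw [← gaussianReal_of_var_ne_zero _ (hm i)]; infer_instance)]
  have hYd : μY = lam.withDensity Q := by
    rw [hμY]
    have he : (fun i : Fin d => gaussianReal (x i + μ i + δ i) ((σ i ^ 2).toNNReal))
        = fun i => (volume : Measure ℝ).withDensity
          (gaussianPDF (x i + μ i + δ i) ((σ i ^ 2).toNNReal)) :=
      funext fun i => gaussianReal_of_var_ne_zero _ (hm i)
    rw [he, np_pi_withDensity _ _ (fun i => measurable_gaussianPDF _ _) (fun i => by
      rw [← gaussianReal_of_var_ne_zero _ (hm i)]; infer_instance)]
  set L : (Fin d → ℝ) → ℝ := fun z => ∑ i, δ i / σ i ^ 2 * z i with hL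
  set C : ℝ := ∑ i, (δ i * (x i + μ i) / σ i ^ 2 + δ i ^ 2 / (2 * σ i ^ 2)) with hC
  have hprod : ∀ z, (∏ i, gaussianPDFReal (x i + μ i + δ i) ((σ i ^ 2).toNNReal) (z i))
      = Real.exp (L z - C) * ∏ i, gaussianPDFReal (x i + μ i) ((σ i ^ 2).toNNReal) (z i) := by
    intro z
    calc (∏ i, gaussianPDFReal (x i + μ i + δ i) ((σ i ^ 2).toNNReal) (z i))
        = ∏ i, (Real.exp (δ i / σ i ^ 2 * z i -
            (δ i * (x i + μ i) / σ i ^ 2 + δ i ^ 2 / (2 * σ i ^ 2))) *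
            gaussianPDFReal (x i + μ i) ((σ i ^ 2).toNNReal) (z i)) :=
          Finset.prod_congr rfl fun i _ => np_pdf_shift _ _ _ _ (hσ i)
      _ = Real.exp (L z - C) * ∏ i, gaussianPDFReal (x i + μ i) ((σ i ^ 2).toNNReal) (z i) := by
          rw [Finset.prod_mul_distrib, ← Real.exp_sum, hL, hC, ← Finset.sum_sub_distrib]
  have hPof : ∀ z, P z = ENNReal.ofReal (∏ i, gaussianPDFReal (x i + μ i)
      ((σ i ^ 2).toNNReal) (z i)) := fun z => by
    rw [ENNReal.ofReal_prod_of_nonneg fun i _ => gaussianPDFReal_nonneg _ _ _]; rfl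
  have hQof : ∀ z, Q z = ENNReal.ofReal (∏ i, gaussianPDFReal (x i + μ i + δ i)
      ((σ i ^ 2).toNNReal) (z i)) := fun z => by
    rw [ENNReal.ofReal_prod_of_nonneg fun i _ => gaussianPDFReal_nonneg _ _ _]; rfl
  set t : ℝ≥0∞ := ENNReal.ofReal (Real.exp (β - C)) with ht
  have hA : ∀ z ∈ S, t * P z ≤ Q z := by
    intro z hz
    rw [hPof, hQof, ht, ← ENNReal.ofReal_mul (Real.exp_nonneg _), hprod z]
    refine ENNReal.ofReal_le_ofReal (mul_le_mul_of_nonneg_right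
      (Real.exp_le_exp.2 (sub_le_sub_right ?_ C))
      (Finset.prod_nonneg fun i _ => gaussianPDFReal_nonneg _ _ _))
    rw [hS] at hz; exact hz
  have hB : ∀ z ∉ S, Q z ≤ t * P z := by
    intro z hz
    rw [hPof, hQof, ht, ← ENNReal.ofReal_mul (Real.exp_nonneg _), hprod z]
    refine ENNReal.ofReal_le_ofReal (mul_le_mul_of_nonneg_right
      (Real.exp_le_exp.2 (sub_le_sub_right ?_ C))
      (Finset.prod_nonneg fun i _ => gaussianPDFReal_nonneg _ _ _))
    rw [hS] at hz
    exact le_of_not_ge hz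
  have hSm : MeasurableSet S := by
    rw [hS]
    simp only [ge_iff_le]
    exact measurableSet_le measurable_const
      (Finset.measurable_sum _ fun i _ => (measurable_pi_apply i).const_mul _)
  have hHm : MeasurableSet {z : Fin d → ℝ | h z = true} := hh (measurableSet_singleton true)
  set H : Set (Fin d → ℝ) := {z | h z = true} with hH
  have ineq1 : μY (H \ S) ≤ t * μX (H \ S) := by
    rw [hXd, hYd, withDensity_apply _ (hHm.diff hSm), withDensity_apply _ (hHm.diff hSm)]
    calc ∫⁻ z in H \ S, Q z ∂lam ≤ ∫⁻ z in H \ S, t * P z ∂lam :=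
          setLIntegral_mono (measurable_const.mul hPm) fun z hz => hB z hz.2
      _ = t * ∫⁻ z in H \ S, P z ∂lam := lintegral_const_mul t hPm
  have ineq2 : t * μX (S \ H) ≤ μY (S \ H) := by
    rw [hXd, hYd, withDensity_apply _ (hSm.diff hHm), withDensity_apply _ (hSm.diff hHm)]
    calc t * ∫⁻ z in S \ H, P z ∂lam = ∫⁻ z in S \ H, t * P z ∂lam :=
          (lintegral_const_mul t hPm).symm
      _ ≤ ∫⁻ z in S \ H, Q z ∂lam := setLIntegral_mono hQm fun z hz => hA z hz.1
  have hcancel : μX (H \ S) ≤ μX (S \ H) := by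
    have h1 := measure_inter_add_diff (μ := μX) H hSm
    have h2 := measure_inter_add_diff (μ := μX) S hHm
    rw [Set.inter_comm] at h1
    rw [← h1, ← h2] at hcond
    exact (ENNReal.add_le_add_iff_left (measure_ne_top μX _)).1 hcond
  have e1 := measure_inter_add_diff (μ := μY) H hSm
  have e2 := measure_inter_add_diff (μ := μY) S hHm
  rw [Set.inter_comm] at e1
  rw [← e1, ← e2]
  exact add_le_add_right (ineq1.trans ((mul_le_mul_right hcancel t).trans ineq2)) _
end

section
/- (Neyman–Pearson for anisotropic Laplace, part 1) Let x, μ, δ ∈ ℝ^d and λ₁,…,λ_d > 0. Let X be a random vector whose i-th coordinate is an independent Laplace random variable with location x_i + μ_i and scale λ_i, and Y a random vector whose i-th coordinate is an independent Laplace random variable with location x_i + μ_i + δ_i and scale λ_i. Let h : ℝ^d → {0,1} be any deterministic measurable function. If S = { z ∈ ℝ^d : Σ_{i=1}^d (1/λ_i)·(|z_i − (x_i+μ_i) − δ_i| − |z_i − (x_i+μ_i)|) ≥ β } for some β ∈ ℝ and P(h(X)=1) ≥ P(X ∈ S), then P(h(Y)=1) ≥ P(Y ∈ S). -/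
set_option maxHeartbeats 1000000

open MeasureTheory ProbabilityTheory

open Set Real

/-- The Laplace density on `ℝ`. -/
noncomputable def lapDen (m l t : ℝ) : ENNReal :=
  ENNReal.ofReal ((2 * l)⁻¹ * Real.exp (-|t - m| / l))

lemma lapDen_measurable (m l : ℝ) : Measurable (lapDen m l) :=
  (((measurable_id.sub_const m).abs.neg.div_const l).exp.const_mul _).ennreal_ofReal

lemma laplaceReal_eq_withDensity (m l : ℝ) :
    laplaceReal m l = volume.withDensity (lapDen m l) := rfl

instance lapDen_sigmaFinite (m l : ℝ) :
    SigmaFinite ((volume : Measure ℝ).withDensity (lapDen m l)) := by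
  have : (lapDen m l) = fun t => ENNReal.ofReal ((2 * l)⁻¹ * Real.exp (-|t - m| / l)) := rfl
  rw [this]
  infer_instance

lemma integrable_exp_neg_abs_div (m l : ℝ) (hl : 0 < l) :
    Integrable (fun z : ℝ => Real.exp (-|z - m| / l)) := by
  have base : Integrable (fun z : ℝ => Real.exp (-|z| / l)) := by
    have hIoi : IntegrableOn (fun z : ℝ => Real.exp (-|z| / l)) (Ioi (0:ℝ)) := by
      refine (exp_neg_integrableOn_Ioi 0 (inv_pos.mpr hl)).congr_fun
        (fun z hz => ?_) measurableSet_Ioi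
      show Real.exp (-l⁻¹ * z) = Real.exp (-|z| / l)
      rw [abs_of_pos hz]
      congr 1
      ring
    rw [← integrableOn_univ, ← Iic_union_Ioi (a := (0:ℝ)), integrableOn_union]
    refine ⟨?_, hIoi⟩
    rw [← (Measure.measurePreserving_neg (volume : Measure ℝ)).integrableOn_comp_preimage
        (Homeomorph.neg ℝ).measurableEmbedding]
    simp only [Function.comp_def, abs_neg, neg_preimage, neg_Iic, neg_zero]
    exact Iff.mpr integrableOn_Ici_iff_integrableOn_Ioi hIoi
  have hmp := measurePreserving_add_right (volume : Measure ℝ) (-m)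
  have := (hmp.integrable_comp base.aestronglyMeasurable).mpr base
  simpa [Function.comp_def, sub_eq_add_neg] using this

lemma laplaceReal_finite (m l : ℝ) (hl : 0 < l) : IsFiniteMeasure (laplaceReal m l) := by
  constructor
  rw [laplaceReal, withDensity_apply _ MeasurableSet.univ, Measure.restrict_univ]
  have hint : Integrable (fun z : ℝ => (2 * l)⁻¹ * Real.exp (-|z - m| / l)) :=
    (integrable_exp_neg_abs_div m l hl).const_mul _
  calc ∫⁻ z : ℝ, ENNReal.ofReal ((2 * l)⁻¹ * Real.exp (-|z - m| / l))
      ≤ ∫⁻ z : ℝ, ‖(2 * l)⁻¹ * Real.exp (-|z - m| / l)‖ₑ :=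
        lintegral_ofReal_le_lintegral_enorm _
    _ < ⊤ := hint.2

/-- Product of lintegrals over a finite product of copies of a sigma-finite measure. -/
lemma lintegral_pi_prod {n : ℕ} (μ : Measure ℝ) [SigmaFinite μ] (f : Fin n → ℝ → ENNReal)
    (hf : ∀ i, Measurable (f i)) :
    ∫⁻ x : Fin n → ℝ, ∏ i, f i (x i) ∂(Measure.pi fun _ => μ) = ∏ i, ∫⁻ t, f i t ∂μ := by
  induction n with
  | zero =>
      simp [Measure.pi_of_empty]
  | succ n ih =>
      have hmeas : Measurable fun x : Fin (n + 1) → ℝ => ∏ i, f i (x i) :=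
        Finset.measurable_prod _ fun i _ => (hf i).comp (measurable_pi_apply i)
      have hmp := (measurePreserving_piFinSuccAbove (fun _ : Fin (n + 1) => μ) 0).symm
      rw [← hmp.lintegral_comp hmeas]
      have heq : ∀ p : ℝ × (Fin n → ℝ),
          (∏ i, f i (((MeasurableEquiv.piFinSuccAbove (fun _ => ℝ) 0).symm p) i)) =
            f 0 p.1 * ∏ j : Fin n, f j.succ (p.2 j) := by
        intro p
        rw [Fin.prod_univ_succ]
        simp [MeasurableEquiv.piFinSuccAbove_symm_apply, Fin.insertNthEquiv,
          Fin.insertNth_zero, Fin.zero_succAbove, Fin.cons_succ, Fin.cons_zero]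
      have hm2 : Measurable fun y : Fin n → ℝ => ∏ j : Fin n, f j.succ (y j) :=
        Finset.measurable_prod _ fun j _ => (hf j.succ).comp (measurable_pi_apply j)
      calc ∫⁻ p : ℝ × (Fin n → ℝ),
              (∏ i, f i (((MeasurableEquiv.piFinSuccAbove (fun _ => ℝ) 0).symm p) i))
              ∂(μ.prod (Measure.pi fun _ : Fin n => μ))
          = ∫⁻ p : ℝ × (Fin n → ℝ), f 0 p.1 * ∏ j : Fin n, f j.succ (p.2 j)
              ∂(μ.prod (Measure.pi fun _ : Fin n => μ)) := lintegral_congr heq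
        _ = (∫⁻ t, f 0 t ∂μ) * ∫⁻ y : Fin n → ℝ, ∏ j : Fin n, f j.succ (y j)
              ∂(Measure.pi fun _ : Fin n => μ) :=
            lintegral_prod_mul (hf 0).aemeasurable hm2.aemeasurable
        _ = ∏ i, ∫⁻ t, f i t ∂μ := by
            rw [ih (fun j => f j.succ) (fun j => hf j.succ), Fin.prod_univ_succ]

/-- A finite product of `withDensity` measures over `ℝ` is `withDensity` of the
product density. -/
lemma pi_withDensity {n : ℕ} (f : Fin n → ℝ → ENNReal) (hf : ∀ i, Measurable (f i))
    [inst : ∀ i, SigmaFinite ((volume : Measure ℝ).withDensity (f i))] :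
    Measure.pi (fun i => (volume : Measure ℝ).withDensity (f i)) =
      (volume : Measure (Fin n → ℝ)).withDensity fun z => ∏ i, f i (z i) := by
  refine Measure.pi_eq (μ := fun i => (volume : Measure ℝ).withDensity (f i))
    (fun s hs => ?_)
  rw [withDensity_apply _ (MeasurableSet.univ_pi hs)]
  rw [← lintegral_indicator (MeasurableSet.univ_pi hs) _]
  have hind : ∀ z : Fin n → ℝ,
      (Set.univ.pi s).indicator (fun z => ∏ i, f i (z i)) z =
        ∏ i, (s i).indicator (f i) (z i) := by
    intro z
    by_cases hz : z ∈ Set.univ.pi s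
    · rw [Set.indicator_of_mem hz]
      refine Finset.prod_congr rfl fun i _ => ?_
      rw [Set.indicator_of_mem (hz i (Set.mem_univ i))]
    · rw [Set.indicator_of_notMem hz]
      rw [Set.mem_univ_pi] at hz
      push_neg at hz
      obtain ⟨i, hi⟩ := hz
      exact (Finset.prod_eq_zero (Finset.mem_univ i)
        (Set.indicator_of_notMem hi _)).symm
  calc ∫⁻ z, (Set.univ.pi s).indicator (fun z => ∏ i, f i (z i)) z
      = ∫⁻ z : Fin n → ℝ, ∏ i, (s i).indicator (f i) (z i) := lintegral_congr hind
    _ = ∏ i, ∫⁻ t, (s i).indicator (f i) t := by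
        rw [volume_pi]
        exact lintegral_pi_prod volume _ fun i => (hf i).indicator (hs i)
    _ = ∏ i, (volume : Measure ℝ).withDensity (f i) (s i) := by
        refine Finset.prod_congr rfl fun i _ => ?_
        rw [withDensity_apply _ (hs i), ← lintegral_indicator (hs i) _]

/-- The one-dimensional density factorization for the Laplace density. -/
lemma lapDen_factor (m dlt l t : ℝ) (hl : 0 < l) :
    lapDen (m + dlt) l t =
      ENNReal.ofReal (Real.exp (-((1 / l) * (|t - m - dlt| - |t - m|)))) * lapDen m l t := by
  rw [lapDen, lapDen, ← ENNReal.ofReal_mul (Real.exp_pos _).le]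
  congr 1
  rw [← mul_assoc, mul_comm (Real.exp _) ((2 * l)⁻¹), mul_assoc, ← Real.exp_add]
  congr 2
  rw [sub_add_eq_sub_sub]
  have hl' : l ≠ 0 := hl.ne'
  field_simp
  ring

/-- Abstract Neyman–Pearson inequality. -/
lemma np_aux {α : Type*} [MeasurableSpace α] (μ ν : Measure α) (w : α → ENNReal)
    (hw : Measurable w) (hν : ν = μ.withDensity w)
    (hfin : ∀ T : Set α, μ T ≠ ⊤) (c : ENNReal) (S A : Set α)
    (hSm : MeasurableSet S) (hAm : MeasurableSet A)
    (hwS : ∀ z ∈ S, w z ≤ c) (hwSc : ∀ z, z ∉ S → c ≤ w z)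
    (hcond : μ S ≤ μ A) : ν S ≤ ν A := by
  have hySA : ν (S \ A) ≤ c * μ (S \ A) := by
    rw [hν, withDensity_apply _ (hSm.diff hAm)]
    calc ∫⁻ z in S \ A, w z ∂μ ≤ ∫⁻ _ in S \ A, c ∂μ :=
          setLIntegral_mono measurable_const fun z hz => hwS z hz.1
      _ = c * μ (S \ A) := setLIntegral_const _ _
  have hyAS : c * μ (A \ S) ≤ ν (A \ S) := by
    rw [hν, withDensity_apply _ (hAm.diff hSm)]
    calc c * μ (A \ S) = ∫⁻ _ in A \ S, c ∂μ := (setLIntegral_const _ _).symm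
      _ ≤ ∫⁻ z in A \ S, w z ∂μ :=
          setLIntegral_mono hw fun z hz => hwSc z hz.2
  have hXdiff : μ (S \ A) ≤ μ (A \ S) := by
    have h1 : μ (S ∩ A) + μ (S \ A) = μ S := measure_inter_add_diff S hAm
    have h2 : μ (A ∩ S) + μ (A \ S) = μ A := measure_inter_add_diff A hSm
    have h3 : μ (S ∩ A) + μ (S \ A) ≤ μ (S ∩ A) + μ (A \ S) := by
      rw [h1, Set.inter_comm S A, h2]
      exact hcond
    exact ENNReal.le_of_add_le_add_left (hfin _) h3
  have hmid : ν (S \ A) ≤ ν (A \ S) :=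
    hySA.trans ((by gcongr : c * μ (S \ A) ≤ c * μ (A \ S)).trans hyAS)
  calc ν S = ν (S ∩ A) + ν (S \ A) := (measure_inter_add_diff S hAm).symm
    _ ≤ ν (S ∩ A) + ν (A \ S) := by gcongr
    _ = ν (A ∩ S) + ν (A \ S) := by rw [Set.inter_comm]
    _ = ν A := measure_inter_add_diff A hSm

/-- Neyman–Pearson for anisotropic Laplace noise, part 1. -/
theorem neyman_pearson_laplace_one
    {d : ℕ} (x μ δ : Fin d → ℝ) (lam : Fin d → ℝ) (hlam : ∀ i, 0 < lam i)
    (μX μY : Measure (Fin d → ℝ))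
    (hμX : μX = Measure.pi fun i : Fin d => laplaceReal (x i + μ i) (lam i))
    (hμY : μY = Measure.pi fun i : Fin d => laplaceReal (x i + μ i + δ i) (lam i))
    (h : (Fin d → ℝ) → Bool) (hh : Measurable h)
    (β : ℝ) (S : Set (Fin d → ℝ))
    (hS : S = {z | ∑ i, (1 / lam i) * (|z i - (x i + μ i) - δ i| - |z i - (x i + μ i)|) ≥ β})
    (hcond : μX {z | h z = true} ≥ μX S) :
    μY {z | h z = true} ≥ μY S := by
  classical
  have hFmeas : Measurable fun z : Fin d → ℝ =>
      ∑ i, (1 / lam i) * (|z i - (x i + μ i) - δ i| - |z i - (x i + μ i)|) := by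
    apply Finset.measurable_sum
    intro i _
    exact ((((measurable_pi_apply i).sub_const _).sub_const _).abs.sub
      ((measurable_pi_apply i).sub_const _).abs).const_mul _
  -- identify μX and μY as withDensity measures
  have hXd : μX = (volume : Measure (Fin d → ℝ)).withDensity
      fun z => ∏ i, lapDen (x i + μ i) (lam i) (z i) := by
    rw [hμX]
    simp only [laplaceReal_eq_withDensity]
    exact pi_withDensity _ fun i => lapDen_measurable _ _
  have hYd : μY = (volume : Measure (Fin d → ℝ)).withDensity
      fun z => ∏ i, lapDen (x i + μ i + δ i) (lam i) (z i) := by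
    rw [hμY]
    simp only [laplaceReal_eq_withDensity]
    exact pi_withDensity _ fun i => lapDen_measurable _ _
  -- density relation
  have hdens : ∀ z : Fin d → ℝ,
      (∏ i, lapDen (x i + μ i + δ i) (lam i) (z i)) =
        ENNReal.ofReal (Real.exp
          (-(∑ i, (1 / lam i) * (|z i - (x i + μ i) - δ i| - |z i - (x i + μ i)|)))) *
          ∏ i, lapDen (x i + μ i) (lam i) (z i) := by
    intro z
    have hexp : Real.exp
        (-(∑ i, (1 / lam i) * (|z i - (x i + μ i) - δ i| - |z i - (x i + μ i)|))) =
        ∏ i, Real.exp (-((1 / lam i) *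
          (|z i - (x i + μ i) - δ i| - |z i - (x i + μ i)|))) := by
      rw [← Real.exp_sum]
      congr 1
      rw [← Finset.sum_neg_distrib]
    rw [hexp, ENNReal.ofReal_prod_of_nonneg (fun i _ => (Real.exp_pos _).le),
      ← Finset.prod_mul_distrib]
    exact Finset.prod_congr rfl fun i _ => lapDen_factor _ _ _ _ (hlam i)
  -- μY = μX.withDensity w
  have hwmeas : Measurable fun z : Fin d → ℝ => ENNReal.ofReal (Real.exp
      (-(∑ i, (1 / lam i) * (|z i - (x i + μ i) - δ i| - |z i - (x i + μ i)|)))) :=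
    (hFmeas.neg.exp).ennreal_ofReal
  have hgXmeas : Measurable fun z : Fin d → ℝ => ∏ i, lapDen (x i + μ i) (lam i) (z i) :=
    Finset.measurable_prod _ fun i _ => (lapDen_measurable _ _).comp (measurable_pi_apply i)
  have hYX : μY = μX.withDensity fun z => ENNReal.ofReal (Real.exp
      (-(∑ i, (1 / lam i) * (|z i - (x i + μ i) - δ i| - |z i - (x i + μ i)|)))) := by
    rw [hYd, hXd, ← withDensity_mul _ hgXmeas hwmeas]
    congr 1
    funext z
    rw [Pi.mul_apply, hdens z, mul_comm]
  -- measurable sets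
  have hAmeas : MeasurableSet {z : Fin d → ℝ | h z = true} :=
    hh (measurableSet_singleton true)
  have hSmeas : MeasurableSet S := by
    rw [hS]
    exact measurableSet_le measurable_const hFmeas
  -- finiteness of μX
  have hfinX : ∀ T : Set (Fin d → ℝ), μX T ≠ ⊤ := by
    intro T
    have hfin : ∀ i, IsFiniteMeasure (laplaceReal (x i + μ i) (lam i)) :=
      fun i => laplaceReal_finite _ _ (hlam i)
    haveI := hfin
    have huniv : μX Set.univ ≠ ⊤ := by
      rw [hμX]
      exact measure_ne_top _ _
    exact fun hT => huniv (top_le_iff.mp (hT ▸ measure_mono (Set.subset_univ T)))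
  -- apply the abstract Neyman–Pearson inequality
  refine np_aux μX μY _ hwmeas hYX hfinX (ENNReal.ofReal (Real.exp (-β)))
    S {z : Fin d → ℝ | h z = true} hSmeas hAmeas ?_ ?_ hcond
  · intro z hz
    rw [hS] at hz
    exact ENNReal.ofReal_le_ofReal (Real.exp_le_exp.mpr (neg_le_neg hz))
  · intro z hz
    rw [hS] at hz
    simp only [Set.mem_setOf_eq, not_le, ge_iff_le] at hz
    exact ENNReal.ofReal_le_ofReal (Real.exp_le_exp.mpr (neg_le_neg hz.le))
end

section
/- Let x, μ, δ ∈ ℝ^d with δ ≠ 0, σ₁,…,σ_d > 0, and p ∈ (0,1). Let Y be a random vector whose i-th coordinate is an independent Gaussian N(x_i + μ_i + δ_i, σ_i²). Then P( Σ_{i=1}^d (δ_i/σ_i²)·(Y_i − μ_i − x_i) ≤ √(Σ_{i=1}^d δ_i²/σ_i²)·Φ⁻¹(p) ) = Φ( Φ⁻¹(p) − √(Σ_{i=1}^d δ_i²/σ_i²) ). -/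
open MeasureTheory ProbabilityTheory

/-- The cumulative distribution function of the standard normal distribution `N(0,1)`. -/
noncomputable def Phi : ℝ → ℝ :=
  fun x => ((gaussianReal 0 1) (Set.Iic x)).toReal

/-- The inverse of the standard normal CDF. -/
noncomputable def PhiInv : ℝ → ℝ := Function.invFun Phi

open Real NNReal


lemma sqrt_const_eq (v1 v2 : ℝ) (h1 : 0 < v1) (h2 : 0 < v2) :
    (√(2 * π * v1))⁻¹ * (√(2 * π * v2))⁻¹ * √(π / ((v1+v2)/(2*v1*v2)))
      = (√(2 * π * (v1+v2)))⁻¹ := by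
  have hπ := Real.pi_pos
  rw [← Real.sqrt_inv, ← Real.sqrt_inv, ← Real.sqrt_inv, ← Real.sqrt_mul (by positivity),
    ← Real.sqrt_mul (by positivity)]
  congr 1
  field_simp

lemma exp_split (v1 v2 x t : ℝ) (h1 : 0 < v1) (h2 : 0 < v2) :
    rexp (-(t-0)^2 / (2*v1)) * rexp (-(x-t-0)^2 / (2*v2))
      = rexp (-(x-0)^2 / (2*(v1+v2))) *
        rexp (-((v1+v2)/(2*v1*v2)) * (t - v1*x/(v1+v2))^2) := by
  rw [← Real.exp_add, ← Real.exp_add]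
  congr 1
  have h12 : v1 + v2 ≠ 0 := by positivity
  field_simp
  ring

lemma pdf_conv_centered (v1 v2 : ℝ≥0) (h1 : 0 < (v1:ℝ)) (h2 : 0 < (v2:ℝ)) (x : ℝ) :
    ∫ t, gaussianPDFReal 0 v1 t * gaussianPDFReal 0 v2 (x - t)
      = gaussianPDFReal 0 (v1+v2) x := by
  simp only [gaussianPDFReal]
  have key : ∀ t : ℝ, (√(2 * π * v1))⁻¹ * rexp (-(t-0)^2 / (2*(v1:ℝ))) *
      ((√(2 * π * v2))⁻¹ * rexp (-(x-t-0)^2 / (2*(v2:ℝ))))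
      = ((√(2 * π * v1))⁻¹ * (√(2 * π * v2))⁻¹ * rexp (-(x-0)^2 / (2*((v1:ℝ)+v2)))) *
        rexp (-(((v1:ℝ)+v2)/(2*v1*v2)) * (t - v1*x/((v1:ℝ)+v2))^2) := by
    intro t
    rw [mul_mul_mul_comm, exp_split _ _ _ _ h1 h2]
    ring
  simp only [key]
  rw [integral_const_mul, integral_sub_right_eq_self
      (fun t : ℝ => rexp (-(((v1:ℝ)+v2)/(2*v1*v2)) * t^2)) ((v1:ℝ)*x/((v1:ℝ)+v2)),
    integral_gaussian]
  push_cast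
  rw [mul_right_comm, sqrt_const_eq _ _ h1 h2]

lemma pdf_shift (m : ℝ) (v : ℝ≥0) (s : ℝ) :
    gaussianPDFReal m v s = gaussianPDFReal 0 v (s - m) := by
  simp [gaussianPDFReal]

lemma pdf_conv (m1 m2 : ℝ) (v1 v2 : ℝ≥0) (h1 : 0 < (v1:ℝ)) (h2 : 0 < (v2:ℝ)) (y : ℝ) :
    ∫ t, gaussianPDFReal m1 v1 t * gaussianPDFReal m2 v2 (y - t)
      = gaussianPDFReal (m1+m2) (v1+v2) y := by
  have e : ∀ t : ℝ, y - m1 - m2 - (t - m1) = y - t - m2 := by intro t; ring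
  calc ∫ t, gaussianPDFReal m1 v1 t * gaussianPDFReal m2 v2 (y - t)
      = ∫ t, gaussianPDFReal 0 v1 (t - m1) *
          gaussianPDFReal 0 v2 (y - m1 - m2 - (t - m1)) := by
        refine integral_congr_ae (Filter.Eventually.of_forall fun t => ?_)
        simp only []; rw [pdf_shift m1, pdf_shift m2, e t]
    _ = ∫ t, gaussianPDFReal 0 v1 t * gaussianPDFReal 0 v2 (y - m1 - m2 - t) :=
        integral_sub_right_eq_self
          (fun t => gaussianPDFReal 0 v1 t * gaussianPDFReal 0 v2 (y - m1 - m2 - t)) m1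
    _ = gaussianPDFReal 0 (v1+v2) (y - m1 - m2) := pdf_conv_centered _ _ h1 h2 _
    _ = gaussianPDFReal (m1+m2) (v1+v2) y := by rw [pdf_shift (m1+m2), sub_sub]

lemma gaussian_conv (m1 m2 : ℝ) (v1 v2 : ℝ≥0) :
    ((gaussianReal m1 v1).prod (gaussianReal m2 v2)).map (fun p : ℝ × ℝ => p.1 + p.2)
      = gaussianReal (m1 + m2) (v1 + v2) := by
  rcases eq_or_ne v1 0 with rfl | h1
  · rw [gaussianReal_zero_var, Measure.dirac_prod,
      Measure.map_map (by fun_prop) (by fun_prop)]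
    have : ((fun p : ℝ × ℝ => p.1 + p.2) ∘ Prod.mk m1) = fun y => m1 + y := rfl
    rw [this, gaussianReal_map_const_add, add_comm m2 m1, zero_add]
  rcases eq_or_ne v2 0 with rfl | h2
  · rw [gaussianReal_zero_var, Measure.prod_dirac,
      Measure.map_map (by fun_prop) (by fun_prop)]
    have : ((fun p : ℝ × ℝ => p.1 + p.2) ∘ fun x => (x, m2)) = fun y => y + m2 := rfl
    rw [this, gaussianReal_map_add_const, add_zero]
  have h1' : 0 < (v1 : ℝ) := by positivity
  have h2' : 0 < (v2 : ℝ) := by positivity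
  have hadd : (v1 + v2 : ℝ≥0) ≠ 0 := by positivity
  have hmap : Measurable (fun p : ℝ × ℝ => p.1 + p.2) := by fun_prop
  refine Measure.ext_of_Iic _ _ fun t => ?_
  rw [Measure.map_apply hmap measurableSet_Iic]
  have hpre : (fun p : ℝ × ℝ => p.1 + p.2) ⁻¹' Set.Iic t = {p : ℝ × ℝ | p.1 + p.2 ≤ t} := rfl
  rw [hpre, Measure.prod_apply (by exact measurableSet_le (by fun_prop) (by fun_prop))]
  have hslice : ∀ x : ℝ, (Prod.mk x ⁻¹' {p : ℝ × ℝ | p.1 + p.2 ≤ t}) = Set.Iic (t - x) := by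
    intro x; ext y; simp [le_sub_iff_add_le']
  simp_rw [hslice]
  -- shift the inner integral
  have hshift : ∀ x : ℝ, (gaussianReal m2 v2) (Set.Iic (t - x))
      = ∫⁻ y in Set.Iic t, ENNReal.ofReal (gaussianPDFReal m2 v2 (y - x)) := by
    intro x
    rw [gaussianReal_apply _ h2, ← lintegral_indicator measurableSet_Iic,
      ← lintegral_indicator measurableSet_Iic]
    rw [← lintegral_add_right_eq_self
      (fun y => (Set.Iic t).indicator (fun u => ENNReal.ofReal (gaussianPDFReal m2 v2 (u - x))) y) x]
    congr 1
    ext y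
    simp only [Set.indicator_apply, Set.mem_Iic]
    by_cases hy : y ≤ t - x
    · rw [if_pos hy, if_pos (by linarith)]
      simp [gaussianPDF, add_sub_cancel_right]
    · rw [if_neg hy, if_neg (by intro h; exact hy (by linarith))]
  simp_rw [hshift]
  rw [gaussianReal_of_var_ne_zero _ h1,
    lintegral_withDensity_eq_lintegral_mul _ (measurable_gaussianPDF _ _)
      (Measurable.lintegral_prod_right (f := fun x y => ENNReal.ofReal (gaussianPDFReal m2 v2 (y - x)))
        (((measurable_gaussianPDFReal m2 v2).comp (measurable_snd.sub measurable_fst)).ennreal_ofReal))]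
  have hpull : ∀ x : ℝ, gaussianPDF m1 v1 x *
      ∫⁻ y in Set.Iic t, ENNReal.ofReal (gaussianPDFReal m2 v2 (y - x))
      = ∫⁻ y in Set.Iic t,
          ENNReal.ofReal (gaussianPDFReal m1 v1 x * gaussianPDFReal m2 v2 (y - x)) := by
    intro x
    rw [gaussianPDF, ← lintegral_const_mul' _ _ ENNReal.ofReal_ne_top]
    congr 1 with y
    rw [← ENNReal.ofReal_mul (gaussianPDFReal_nonneg _ _ _)]
  simp only [Pi.mul_apply]
  rw [lintegral_congr hpull]
  rw [lintegral_lintegral_swap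
    (Measurable.aemeasurable (by
      exact (((measurable_gaussianPDFReal m1 v1).comp measurable_fst).mul
        ((measurable_gaussianPDFReal m2 v2).comp (measurable_snd.sub measurable_fst))).ennreal_ofReal))]
  have hint : ∀ y : ℝ, Integrable
      (fun x => gaussianPDFReal m1 v1 x * gaussianPDFReal m2 v2 (y - x)) := by
    intro y
    have hb : ∀ x : ℝ, ‖gaussianPDFReal m2 v2 (y - x)‖ ≤ (√(2 * π * v2))⁻¹ := by
      intro x
      rw [Real.norm_of_nonneg (gaussianPDFReal_nonneg _ _ _), gaussianPDFReal]
      calc (√(2 * π * (v2:ℝ)))⁻¹ * rexp (-(y - x - m2)^2 / (2 * v2))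
          ≤ (√(2 * π * (v2:ℝ)))⁻¹ * 1 := by
            refine mul_le_mul_of_nonneg_left ?_ (by positivity)
            exact Real.exp_le_one_iff.mpr
              (div_nonpos_of_nonpos_of_nonneg (neg_nonpos.mpr (sq_nonneg _)) (by positivity))
        _ = (√(2 * π * (v2:ℝ)))⁻¹ := mul_one _
    have := (integrable_gaussianPDFReal m1 v1).bdd_mul
      (((measurable_gaussianPDFReal m2 v2).comp (measurable_const.sub measurable_id : Measurable fun x : ℝ => y - x)).aestronglyMeasurable)
      (Filter.Eventually.of_forall hb)
    exact this.congr (Filter.Eventually.of_forall fun x => mul_comm _ _)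
  have hconv : ∀ y : ℝ, (∫⁻ x, ENNReal.ofReal
      (gaussianPDFReal m1 v1 x * gaussianPDFReal m2 v2 (y - x)))
      = gaussianPDF (m1 + m2) (v1 + v2) y := by
    intro y
    rw [← ofReal_integral_eq_lintegral_ofReal (hint y)
      (Filter.Eventually.of_forall fun x =>
        mul_nonneg (gaussianPDFReal_nonneg _ _ _) (gaussianPDFReal_nonneg _ _ _)),
      pdf_conv m1 m2 v1 v2 h1' h2' y, gaussianPDF]
  simp_rw [hconv]
  rw [gaussianReal_apply _ hadd]

noncomputable def sqNN (a : ℝ) : ℝ≥0 := ⟨a^2, sq_nonneg a⟩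

lemma gaussian_pi_map (d : ℕ) (c m : Fin d → ℝ) (v : Fin d → ℝ≥0) :
    (Measure.pi fun i => gaussianReal (m i) (v i)).map (fun z => ∑ i, c i * z i)
      = gaussianReal (∑ i, c i * m i) (∑ i, sqNN (c i) * v i) := by
  induction d with
  | zero =>
    rw [show (fun z : Fin 0 → ℝ => ∑ i, c i * z i) = fun _ => (0:ℝ) by
      funext z; simp]
    rw [Measure.map_const, measure_univ, one_smul]
    simp [gaussianReal_zero_var]
  | succ n ih =>
    set e := MeasurableEquiv.piFinSuccAbove (fun _ : Fin (n+1) => ℝ) 0 with he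
    have hfe : (fun z : Fin (n+1) → ℝ => ∑ i, c i * z i)
        = (fun p : ℝ × (Fin n → ℝ) => c 0 * p.1 + ∑ j, c j.succ * p.2 j) ∘ e := by
      funext z
      simp [he, MeasurableEquiv.piFinSuccAbove, Fin.sum_univ_succ, Fin.succAbove_zero, Fin.tail]
    rw [hfe, ← Measure.map_map (by fun_prop) e.measurable,
      (measurePreserving_piFinSuccAbove (fun i => gaussianReal (m i) (v i)) 0).map_eq]
    have hg : (fun p : ℝ × (Fin n → ℝ) => c 0 * p.1 + ∑ j, c j.succ * p.2 j)
        = (fun q : ℝ × ℝ => q.1 + q.2) ∘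
          (Prod.map (fun a => c 0 * a) (fun w : Fin n → ℝ => ∑ j, c j.succ * w j)) := by
      funext p; rfl
    rw [hg, ← Measure.map_map (by fun_prop) (by fun_prop),
      ← Measure.map_prod_map _ _ (by fun_prop) (by fun_prop)]
    have htail : (Measure.pi fun j : Fin n =>
        gaussianReal (m ((0:Fin (n+1)).succAbove j)) (v ((0:Fin (n+1)).succAbove j))).map
        (fun w : Fin n → ℝ => ∑ j, c j.succ * w j)
        = gaussianReal (∑ j : Fin n, c j.succ * m j.succ)
            (∑ j : Fin n, sqNN (c j.succ) * v j.succ) := by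
      simpa [Fin.succAbove_zero] using ih (fun j => c j.succ) (fun j => m j.succ) (fun j => v j.succ)
    rw [htail, gaussianReal_map_const_mul, gaussian_conv]
    rw [Fin.sum_univ_succ (f := fun i => c i * m i),
      Fin.sum_univ_succ (f := fun i => sqNN (c i) * v i)]
    rfl

lemma gaussian_Iic (M : ℝ) (V : ℝ≥0) (hV : 0 < (V:ℝ)) (T : ℝ) :
    ((gaussianReal M V) (Set.Iic T)).toReal = Phi ((T - M) / Real.sqrt V) := by
  have hs : (0:ℝ) < Real.sqrt V := Real.sqrt_pos.mpr hV
  have hrepr : gaussianReal M V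
      = ((gaussianReal 0 1).map (fun u => Real.sqrt V * u)).map (· + M) := by
    rw [gaussianReal_map_const_mul, gaussianReal_map_add_const]
    congr 1
    · ring
    · rw [mul_one]
      ext
      simp [Real.sq_sqrt V.coe_nonneg]
  have h1 : (· + M) ⁻¹' Set.Iic T = Set.Iic (T - M) := by
    ext u; simp [le_sub_iff_add_le]
  have h2 : (fun u => Real.sqrt V * u) ⁻¹' Set.Iic (T - M)
      = Set.Iic ((T - M) / Real.sqrt V) := by
    ext u; simp [le_div_iff₀ hs, mul_comm]
  rw [hrepr, Measure.map_apply (by fun_prop) measurableSet_Iic, h1,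
    Measure.map_apply (by fun_prop) measurableSet_Iic, h2]
  rfl


theorem gaussian_halfspace_prob_Y_le
    {d : ℕ} (x μ δ σ : Fin d → ℝ) (hσ : ∀ i, 0 < σ i) (hδ : δ ≠ 0)
    (p : ℝ) (hp : p ∈ Set.Ioo (0 : ℝ) 1)
    (μY : Measure (Fin d → ℝ))
    (hμY : μY = Measure.pi fun i : Fin d => gaussianReal (x i + μ i + δ i) ((σ i ^ 2).toNNReal)) :
    (μY {z | ∑ i, δ i / σ i ^ 2 * (z i - μ i - x i) ≤
        Real.sqrt (∑ i, δ i ^ 2 / σ i ^ 2) * PhiInv p}).toReal =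
      Phi (PhiInv p - Real.sqrt (∑ i, δ i ^ 2 / σ i ^ 2)) := by
  subst hμY
  set c : Fin d → ℝ := fun i => δ i / σ i ^ 2 with hc
  set q : ℝ := PhiInv p with hq
  set s2 : ℝ := ∑ i, δ i ^ 2 / σ i ^ 2 with hs2
  set s : ℝ := Real.sqrt s2 with hs
  set C : ℝ := ∑ i, c i * (μ i + x i) with hC
  have hσne : ∀ i, σ i ≠ 0 := fun i => (hσ i).ne'
  -- positivity of s2
  obtain ⟨i0, hi0⟩ := Function.ne_iff.mp hδ
  have hs2pos : 0 < s2 := by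
    refine Finset.sum_pos' (fun i _ => by positivity) ⟨i0, Finset.mem_univ _, ?_⟩
    have h1 : δ i0 ≠ 0 := by simpa using hi0
    have h2 := hσ i0
    positivity
  have hspos : 0 < s := Real.sqrt_pos.mpr hs2pos
  have hset : {z : Fin d → ℝ | ∑ i, c i * (z i - μ i - x i) ≤ s * q}
      = (fun z : Fin d → ℝ => ∑ i, c i * z i) ⁻¹' Set.Iic (s * q + C) := by
    ext z
    simp only [Set.mem_setOf_eq, Set.mem_preimage, Set.mem_Iic]
    have : ∑ i, c i * (z i - μ i - x i) = (∑ i, c i * z i) - C := by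
      rw [hC, ← Finset.sum_sub_distrib]
      congr 1 with i
      ring
    rw [this, sub_le_iff_le_add]
  rw [hset, ← Measure.map_apply (by fun_prop) measurableSet_Iic,
    gaussian_pi_map d c (fun i => x i + μ i + δ i) (fun i => (σ i ^ 2).toNNReal)]
  set V : ℝ≥0 := ∑ i, sqNN (c i) * (σ i ^ 2).toNNReal with hV
  have hVcoe : (V:ℝ) = s2 := by
    rw [hV, hs2, NNReal.coe_sum]
    congr 1 with i
    rw [NNReal.coe_mul, Real.coe_toNNReal _ (by positivity)]
    show (c i)^2 * σ i ^2 = _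
    rw [hc]
    have := hσne i
    field_simp
  have hVpos : 0 < (V:ℝ) := hVcoe ▸ hs2pos
  have hM : ∑ i, c i * (x i + μ i + δ i) = C + s2 := by
    rw [hC, hs2, ← Finset.sum_add_distrib]
    congr 1 with i
    rw [hc]
    have := hσne i
    field_simp
    ring
  rw [hM, gaussian_Iic _ _ hVpos]
  congr 1
  rw [hVcoe, ← hs]
  rw [show s * q + C - (C + s2) = s * q - s2 by ring,
    show s2 = s ^ 2 from (Real.sq_sqrt hs2pos.le).symm]
  field_simp
end

section
/- Let x, μ, δ ∈ ℝ^d with δ ≠ 0, σ₁,…,σ_d > 0, and p ∈ (0,1). Let Y be a random vector whose i-th coordinate is an independent Gaussian N(x_i + μ_i + δ_i, σ_i²). Then P( Σ_{i=1}^d (δ_i/σ_i²)·(Y_i − μ_i − x_i) ≥ √(Σ_{i=1}^d δ_i²/σ_i²)·Φ⁻¹(1 − p) ) = Φ( Φ⁻¹(p) + √(Σ_{i=1}^d δ_i²/σ_i²) ). -/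
open MeasureTheory ProbabilityTheory

open Real Set Filter
open scoped NNReal ENNReal Topology

private lemma aux_exponent_id (V1 V2 a m1 y : ℝ) (h1 : V1 ≠ 0) (h2 : V2 ≠ 0)
    (h12 : V1 + V2 ≠ 0) :
    -(a - m1) ^ 2 / (2 * V1) + -(y - (a - m1)) ^ 2 / (2 * V2)
      = -y ^ 2 / (2 * (V1 + V2)) +
        -((V1 + V2) / (2 * V1 * V2)) * (a - (m1 + V1 * y / (V1 + V2))) ^ 2 := by
  field_simp
  ring

private lemma aux_sqrt_id (V1 V2 : ℝ) (h1 : 0 < V1) (h2 : 0 < V2) :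
    π / ((V1 + V2) / (2 * V1 * V2)) = 2 * π * V1 * (2 * π * V2) / (2 * π * (V1 + V2)) := by
  have h12 : V1 + V2 ≠ 0 := by positivity
  field_simp

lemma aux_conv_pdf (m1 m2 : ℝ) (v1 v2 : ℝ≥0) (h1 : v1 ≠ 0) (h2 : v2 ≠ 0) (t : ℝ) :
    ∫ a : ℝ, gaussianPDFReal m1 v1 a * gaussianPDFReal m2 v2 (t - a) =
      gaussianPDFReal (m1 + m2) (v1 + v2) t := by
  have hV1 : (0:ℝ) < v1 := by positivity
  have hV2 : (0:ℝ) < v2 := by positivity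
  set V1 : ℝ := (v1 : ℝ)
  set V2 : ℝ := (v2 : ℝ)
  have hV12 : (0:ℝ) < V1 + V2 := by linarith
  set y : ℝ := t - m1 - m2 with hy
  set b : ℝ := (V1 + V2) / (2 * V1 * V2) with hb
  have hbpos : 0 < b := by positivity
  set s : ℝ := m1 + V1 * y / (V1 + V2) with hs
  set K : ℝ := (√(2 * π * V1))⁻¹ * (√(2 * π * V2))⁻¹ * rexp (-y^2 / (2 * (V1 + V2))) with hK
  have hpt : ∀ a : ℝ, gaussianPDFReal m1 v1 a * gaussianPDFReal m2 v2 (t - a)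
      = K * rexp (-b * (a - s)^2) := by
    intro a
    have lhs_eq : gaussianPDFReal m1 v1 a * gaussianPDFReal m2 v2 (t - a)
        = (√(2*π*V1))⁻¹ * (√(2*π*V2))⁻¹ *
          rexp (-(a - m1) ^ 2 / (2 * V1) + -(t - a - m2) ^ 2 / (2 * V2)) := by
      rw [gaussianPDFReal, gaussianPDFReal, Real.exp_add]; ring
    have rhs_eq : K * rexp (-b * (a - s)^2)
        = (√(2*π*V1))⁻¹ * (√(2*π*V2))⁻¹ *
          rexp (-y^2/(2*(V1+V2)) + -b*(a-s)^2) := by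
      rw [hK, Real.exp_add]; ring
    rw [lhs_eq, rhs_eq]
    congr 2
    have hta : t - a - m2 = y - (a - m1) := by rw [hy]; ring
    rw [hta, hb, hs]
    exact aux_exponent_id V1 V2 a m1 y hV1.ne' hV2.ne' hV12.ne'
  rw [MeasureTheory.integral_congr_ae (ae_of_all _ hpt), MeasureTheory.integral_const_mul,
    MeasureTheory.integral_sub_right_eq_self (fun u => rexp (-b * u ^ 2)) s, integral_gaussian b]
  have hsqrt : √(π / b) = √(2*π*V1) * √(2*π*V2) / √(2*π*(V1+V2)) := by
    rw [← Real.sqrt_mul (by positivity), ← Real.sqrt_div (by positivity)]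
    congr 1
    rw [hb]
    exact aux_sqrt_id V1 V2 hV1 hV2
  rw [gaussianPDFReal, hK, hsqrt]
  have e1 : √(2*π*V1) ≠ 0 := by positivity
  have e2 : √(2*π*V2) ≠ 0 := by positivity
  have e3 : √(2*π*(V1+V2)) ≠ 0 := by positivity
  have hcoe : ((v1 + v2 : ℝ≥0) : ℝ) = V1 + V2 := by push_cast; ring
  rw [hcoe]
  have hyy : t - (m1 + m2) = y := by rw [hy]; ring
  rw [hyy]
  field_simp

lemma aux_pdf_le (m : ℝ) (v : ℝ≥0) (t : ℝ) : gaussianPDFReal m v t ≤ (√(2 * π * v))⁻¹ := by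
  rw [gaussianPDFReal]
  have h1 : rexp (-(t - m) ^ 2 / (2 * v)) ≤ 1 := by
    rw [Real.exp_le_one_iff]
    apply div_nonpos_of_nonpos_of_nonneg (neg_nonpos.mpr (sq_nonneg _))
    positivity
  calc (√(2 * π * v))⁻¹ * rexp (-(t - m) ^ 2 / (2 * v)) ≤ (√(2 * π * v))⁻¹ * 1 := by
        apply mul_le_mul_of_nonneg_left h1 (by positivity)
    _ = (√(2 * π * v))⁻¹ := mul_one _

lemma aux_conv_integrable (m1 m2 : ℝ) (v1 v2 : ℝ≥0) (x : ℝ) :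
    Integrable (fun a => gaussianPDFReal m2 v2 (x - a) * gaussianPDFReal m1 v1 a) := by
  refine Integrable.bdd_mul (c := (√(2 * π * v2))⁻¹) (integrable_gaussianPDFReal m1 v1) ?_ ?_
  · exact ((measurable_gaussianPDFReal m2 v2).comp (measurable_const.sub measurable_id)).aestronglyMeasurable
  · refine ae_of_all _ fun a => ?_
    rw [Real.norm_eq_abs, abs_of_nonneg (gaussianPDFReal_nonneg _ _ _)]
    exact aux_pdf_le m2 v2 (x - a)

lemma aux_conv_gaussian (m1 m2 : ℝ) (v1 v2 : ℝ≥0) :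
    Measure.map (fun p : ℝ × ℝ => p.1 + p.2)
      ((gaussianReal m1 v1).prod (gaussianReal m2 v2)) = gaussianReal (m1 + m2) (v1 + v2) := by
  by_cases h1 : v1 = 0
  · subst h1
    rw [gaussianReal_zero_var, Measure.dirac_prod, Measure.map_map measurable_add
      (measurable_prodMk_left), zero_add]
    have : ((fun p : ℝ × ℝ => p.1 + p.2) ∘ Prod.mk m1) = fun b => m1 + b := rfl
    rw [this, gaussianReal_map_const_add, add_comm m2 m1]
  by_cases h2 : v2 = 0
  · subst h2
    rw [gaussianReal_zero_var, Measure.prod_dirac, Measure.map_map measurable_add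
      (measurable_prodMk_right), add_zero]
    have : ((fun p : ℝ × ℝ => p.1 + p.2) ∘ fun x => (x, m2)) = fun a => a + m2 := rfl
    rw [this, gaussianReal_map_add_const]
  -- main case
  have h12 : v1 + v2 ≠ 0 := by simp [h1]
  ext s hs
  rw [Measure.map_apply measurable_add hs, gaussianReal_apply _ h12 s]
  have hps : MeasurableSet ((fun p : ℝ × ℝ => p.1 + p.2) ⁻¹' s) := measurable_add hs
  rw [Measure.prod_apply hps]
  have hindm : Measurable (s.indicator (fun _ => (1:ℝ≥0∞))) := measurable_one.indicator hs
  have inner_eq : ∀ a : ℝ, gaussianReal m2 v2 (Prod.mk a ⁻¹' ((fun p : ℝ × ℝ => p.1 + p.2) ⁻¹' s))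
      = ∫⁻ x, s.indicator (fun _ => (1:ℝ≥0∞)) x * gaussianPDF m2 v2 (x - a) := by
    intro a
    rw [gaussianReal_apply _ h2]
    have hts : MeasurableSet {b : ℝ | a + b ∈ s} := hs.preimage (measurable_const_add a)
    have step1 : ∫⁻ b in {b : ℝ | a + b ∈ s}, gaussianPDF m2 v2 b
        = ∫⁻ b, s.indicator (fun _ => (1:ℝ≥0∞)) (b + a) * gaussianPDF m2 v2 b := by
      rw [← lintegral_indicator hts]
      refine lintegral_congr fun b => ?_
      rw [add_comm b a]
      by_cases hb : a + b ∈ s <;> simp [Set.indicator, hb]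
    have step2 : ∫⁻ b, s.indicator (fun _ => (1:ℝ≥0∞)) (b + a) * gaussianPDF m2 v2 b
        = ∫⁻ x, s.indicator (fun _ => (1:ℝ≥0∞)) x * gaussianPDF m2 v2 (x - a) := by
      have := lintegral_add_right_eq_self (μ := volume)
        (fun x => s.indicator (fun _ => (1:ℝ≥0∞)) x * gaussianPDF m2 v2 (x - a)) a
      rw [← this]
      refine lintegral_congr fun b => ?_
      simp
    have hpre : (Prod.mk a ⁻¹' ((fun p : ℝ × ℝ => p.1 + p.2) ⁻¹' s)) = {b : ℝ | a + b ∈ s} := rfl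
    rw [hpre, step1, step2]
  rw [lintegral_congr inner_eq]
  -- now unfold outer gaussian as withDensity
  rw [gaussianReal_of_var_ne_zero _ h1]
  have hG : Measurable fun q : ℝ × ℝ =>
      s.indicator (fun _ => (1:ℝ≥0∞)) q.2 * gaussianPDF m2 v2 (q.2 - q.1) :=
    (hindm.comp measurable_snd).mul
      ((measurable_gaussianPDF m2 v2).comp (measurable_snd.sub measurable_fst))
  have hg : Measurable fun a : ℝ =>
      ∫⁻ x, s.indicator (fun _ => (1:ℝ≥0∞)) x * gaussianPDF m2 v2 (x - a) :=
    hG.lintegral_prod_right'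
  rw [lintegral_withDensity_eq_lintegral_mul _ (measurable_gaussianPDF m1 v1) hg]
  have swap_eq : ∫⁻ a, (gaussianPDF m1 v1 * fun a =>
        ∫⁻ x, s.indicator (fun _ => (1:ℝ≥0∞)) x * gaussianPDF m2 v2 (x - a)) a
      = ∫⁻ x, s.indicator (fun _ => (1:ℝ≥0∞)) x *
          ∫⁻ a, gaussianPDF m1 v1 a * gaussianPDF m2 v2 (x - a) := by
    have e1 : ∀ a : ℝ, (gaussianPDF m1 v1 * fun a =>
          ∫⁻ x, s.indicator (fun _ => (1:ℝ≥0∞)) x * gaussianPDF m2 v2 (x - a)) a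
        = ∫⁻ x, gaussianPDF m1 v1 a *
            (s.indicator (fun _ => (1:ℝ≥0∞)) x * gaussianPDF m2 v2 (x - a)) := by
      intro a
      simp only [Pi.mul_apply]
      have hfa : Measurable fun x : ℝ =>
          s.indicator (fun _ => (1:ℝ≥0∞)) x * gaussianPDF m2 v2 (x - a) := by
        exact hindm.mul ((measurable_gaussianPDF m2 v2).comp (measurable_id.sub measurable_const))
      rw [← lintegral_const_mul _ hfa]
    rw [lintegral_congr e1]
    rw [lintegral_lintegral_swap]
    · refine lintegral_congr fun x => ?_
      have hfb : Measurable fun a : ℝ =>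
          gaussianPDF m1 v1 a * gaussianPDF m2 v2 (x - a) := by
        exact (measurable_gaussianPDF m1 v1).mul
          ((measurable_gaussianPDF m2 v2).comp (measurable_const.sub measurable_id))
      rw [← lintegral_const_mul _ hfb]
      refine lintegral_congr fun a => ?_
      ring
    · apply Measurable.aemeasurable
      exact ((measurable_gaussianPDF m1 v1).comp measurable_fst).mul
        ((hindm.comp measurable_snd).mul ((measurable_gaussianPDF m2 v2).comp
          (measurable_snd.sub measurable_fst)))
  rw [swap_eq]
  have conv_eq : ∀ x : ℝ, ∫⁻ a, gaussianPDF m1 v1 a * gaussianPDF m2 v2 (x - a)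
      = gaussianPDF (m1 + m2) (v1 + v2) x := by
    intro x
    have e2 : ∀ a : ℝ, gaussianPDF m1 v1 a * gaussianPDF m2 v2 (x - a)
        = ENNReal.ofReal (gaussianPDFReal m2 v2 (x - a) * gaussianPDFReal m1 v1 a) := by
      intro a
      rw [gaussianPDF, gaussianPDF, ← ENNReal.ofReal_mul (gaussianPDFReal_nonneg _ _ _), mul_comm]
    rw [lintegral_congr e2, ← ofReal_integral_eq_lintegral_ofReal
      (aux_conv_integrable m1 m2 v1 v2 x)
      (ae_of_all _ fun a => mul_nonneg (gaussianPDFReal_nonneg _ _ _)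
        (gaussianPDFReal_nonneg _ _ _))]
    rw [show ∫ a, gaussianPDFReal m2 v2 (x - a) * gaussianPDFReal m1 v1 a
        = ∫ a, gaussianPDFReal m1 v1 a * gaussianPDFReal m2 v2 (x - a) from
      integral_congr_ae (ae_of_all _ fun a => mul_comm _ _)]
    rw [aux_conv_pdf m1 m2 v1 v2 h1 h2 x]
    rfl
  have final : ∫⁻ x, s.indicator (fun _ => (1:ℝ≥0∞)) x *
        ∫⁻ a, gaussianPDF m1 v1 a * gaussianPDF m2 v2 (x - a)
      = ∫⁻ x in s, gaussianPDF (m1 + m2) (v1 + v2) x := by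
    rw [← lintegral_indicator hs]
    refine lintegral_congr fun x => ?_
    rw [conv_eq x]
    by_cases hx : x ∈ s <;> simp [Set.indicator, hx]
  exact final

lemma aux_map_weighted_sum : ∀ (n : ℕ) (c m : Fin n → ℝ) (v : Fin n → ℝ≥0),
    Measure.map (fun z : Fin n → ℝ => ∑ i, c i * z i)
        (Measure.pi fun i => gaussianReal (m i) (v i))
      = gaussianReal (∑ i, c i * m i) (∑ i, ((c i)^2).toNNReal * v i) := by
  intro n
  induction n with
  | zero =>
    intro c m v
    simp only [Finset.univ_eq_empty, Finset.sum_empty]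
    rw [Measure.map_const, measure_univ, one_smul, ← gaussianReal_zero_var]
  | succ n ih =>
    intro c m v
    set e := MeasurableEquiv.piFinSuccAbove (fun _ : Fin (n+1) => ℝ) 0 with he
    have hmp := measurePreserving_piFinSuccAbove (fun i => gaussianReal (m i) (v i)) 0
    set F : (Fin (n+1) → ℝ) → ℝ := fun z => ∑ i, c i * z i with hF
    have hFm : Measurable F := by
      exact Finset.measurable_sum _ fun i _ => (measurable_pi_apply i).const_mul _
    have key : Measure.map F (Measure.pi fun i => gaussianReal (m i) (v i))
        = Measure.map (F ∘ e.symm)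
            ((gaussianReal (m 0) (v 0)).prod
              (Measure.pi fun j => gaussianReal (m ((0: Fin (n+1)).succAbove j))
                (v ((0: Fin (n+1)).succAbove j)))) := by
      rw [← hmp.map_eq, Measure.map_map (hFm.comp e.symm.measurable) e.measurable]
      congr 1
      ext z
      simp [Function.comp]
    rw [key]
    have hcomp : F ∘ e.symm = (fun p : ℝ × ℝ => p.1 + p.2) ∘
        (Prod.map (fun a : ℝ => c 0 * a)
          (fun f : Fin n → ℝ => ∑ j, c (Fin.succ j) * f j)) := by
      ext p
      obtain ⟨a, f⟩ := p
      simp only [Function.comp_apply, Prod.map_apply]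
      have h2 : e.symm (a, f) = Fin.cons a f := by
        simp [he, MeasurableEquiv.piFinSuccAbove, Fin.insertNthEquiv, Fin.insertNth_zero]
      rw [h2]
      simp only [hF]
      rw [Fin.sum_univ_succ]
      simp
    have hm1 : Measurable fun a : ℝ => c 0 * a := measurable_id.const_mul _
    have hm2 : Measurable fun f : Fin n → ℝ => ∑ j, c (Fin.succ j) * f j :=
      Finset.measurable_sum _ fun j _ => (measurable_pi_apply j).const_mul _
    rw [hcomp, ← Measure.map_map measurable_add (hm1.prodMap hm2),
      ← Measure.map_prod_map _ _ hm1 hm2]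
    have hsucc : ∀ j : Fin n, (0 : Fin (n+1)).succAbove j = Fin.succ j := fun j => by
      simp [Fin.succAbove_zero]
    simp_rw [hsucc]
    rw [show (fun a : ℝ => c 0 * a) = (c 0 * ·) from rfl, gaussianReal_map_const_mul,
      ih (fun j => c (Fin.succ j)) (fun j => m (Fin.succ j)) (fun j => v (Fin.succ j)),
      aux_conv_gaussian]
    have hv0 : (⟨(c 0)^2, sq_nonneg _⟩ : ℝ≥0) = ((c 0)^2).toNNReal := by
      ext
      simp [Real.coe_toNNReal _ (sq_nonneg _)]
    rw [Fin.sum_univ_succ (f := fun i => c i * m i),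
      Fin.sum_univ_succ (f := fun i => ((c i)^2).toNNReal * v i)]
    exact congrArg (fun w : ℝ≥0 => gaussianReal _ (w * v 0 + _)) hv0

lemma aux_Phi_eq_cdf : Phi = cdf (gaussianReal 0 1) := by
  funext x
  rw [Phi, cdf_eq_real, measureReal_def]

lemma aux_Phi_mono : Monotone Phi := by rw [aux_Phi_eq_cdf]; exact monotone_cdf _

lemma aux_Phi_tendsto_atTop : Tendsto Phi atTop (𝓝 1) := by
  rw [aux_Phi_eq_cdf]; exact tendsto_cdf_atTop _

lemma aux_Phi_tendsto_atBot : Tendsto Phi atBot (𝓝 0) := by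
  rw [aux_Phi_eq_cdf]; exact tendsto_cdf_atBot _

lemma aux_Phi_strictMono : StrictMono Phi := by
  intro a b hab
  have h1 : gaussianReal 0 1 (Iic a) + gaussianReal 0 1 (Ioc a b) = gaussianReal 0 1 (Iic b) := by
    rw [← measure_union (Iic_disjoint_Ioc le_rfl) measurableSet_Ioc,
      Set.Iic_union_Ioc_eq_Iic hab.le]
  have h2 : gaussianReal 0 1 (Ioc a b) ≠ 0 := by
    intro h0
    have := (gaussianReal_absolutelyContinuous' 0 one_ne_zero) h0
    rw [Real.volume_Ioc] at this
    simp [ENNReal.ofReal_eq_zero, hab] at this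
    linarith
  rw [Phi, Phi, ← h1]
  have hfin : (gaussianReal 0 1) (Iic a) + (gaussianReal 0 1) (Ioc a b) ≠ ⊤ :=
    ENNReal.add_ne_top.mpr ⟨measure_ne_top _ _, measure_ne_top _ _⟩
  rw [ENNReal.toReal_lt_toReal (measure_ne_top _ _) hfin]
  exact ENNReal.lt_add_right (measure_ne_top _ _) h2
  
lemma aux_Phi_lipschitz : LipschitzWith 1 Phi := by
  have key : ∀ a b : ℝ, a ≤ b → Phi b - Phi a ≤ b - a := by
    intro a b hab
    have h1 : gaussianReal 0 1 (Iic a) + gaussianReal 0 1 (Ioc a b) = gaussianReal 0 1 (Iic b) := by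
      rw [← measure_union (Iic_disjoint_Ioc le_rfl) measurableSet_Ioc,
        Set.Iic_union_Ioc_eq_Iic hab]
    have h2 : gaussianReal 0 1 (Ioc a b) ≤ ENNReal.ofReal (b - a) := by
      rw [gaussianReal_apply _ one_ne_zero]
      calc ∫⁻ x in Ioc a b, gaussianPDF 0 1 x
          ≤ ∫⁻ _ in Ioc a b, 1 := by
            refine setLIntegral_mono measurable_const fun x _ => ?_
            rw [gaussianPDF]
            refine le_trans (ENNReal.ofReal_le_ofReal ?_) ENNReal.ofReal_one.le
            calc gaussianPDFReal 0 1 x ≤ (√(2 * π * (1:ℝ≥0)))⁻¹ := by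
                  rw [gaussianPDFReal]
                  have h1 : rexp (-(x - 0) ^ 2 / (2 * (1:ℝ≥0))) ≤ 1 := by
                    rw [Real.exp_le_one_iff]
                    apply div_nonpos_of_nonpos_of_nonneg (neg_nonpos.mpr (sq_nonneg _))
                    positivity
                  calc (√(2 * π * (1:ℝ≥0)))⁻¹ * rexp (-(x - 0) ^ 2 / (2 * (1:ℝ≥0)))
                      ≤ (√(2 * π * (1:ℝ≥0)))⁻¹ * 1 :=
                        mul_le_mul_of_nonneg_left h1 (by positivity)
                    _ = (√(2 * π * (1:ℝ≥0)))⁻¹ := mul_one _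
              _ ≤ 1 := by
                  rw [NNReal.coe_one, mul_one]
                  rw [inv_le_one_iff₀]
                  right
                  rw [show (1:ℝ) = √1 from (Real.sqrt_one).symm]
                  apply Real.sqrt_le_sqrt
                  nlinarith [Real.pi_gt_three]
        _ = ENNReal.ofReal (b - a) := by
            rw [setLIntegral_const, one_mul, Real.volume_Ioc]
    have h3 : Phi b - Phi a = (gaussianReal 0 1 (Ioc a b)).toReal := by
      rw [Phi, Phi, ← h1, ENNReal.toReal_add (measure_ne_top _ _) (measure_ne_top _ _)]
      ring
    rw [h3]
    calc (gaussianReal 0 1 (Ioc a b)).toReal ≤ (ENNReal.ofReal (b - a)).toReal :=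
          ENNReal.toReal_mono ENNReal.ofReal_ne_top h2
      _ ≤ b - a := by rw [ENNReal.toReal_ofReal (sub_nonneg.mpr hab)]
  refine LipschitzWith.of_dist_le_mul fun x y => ?_
  rw [NNReal.coe_one, one_mul, Real.dist_eq, Real.dist_eq]
  rcases le_total x y with h | h
  · rw [abs_sub_comm, abs_of_nonneg (sub_nonneg.mpr (aux_Phi_mono h)),
      abs_sub_comm, abs_of_nonneg (sub_nonneg.mpr h)]
    exact key x y h
  · rw [abs_of_nonneg (sub_nonneg.mpr (aux_Phi_mono h)), abs_of_nonneg (sub_nonneg.mpr h)]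
    exact key y x h

lemma aux_Phi_continuous : Continuous Phi := aux_Phi_lipschitz.continuous

lemma aux_Phi_neg (y : ℝ) : Phi (-y) = ((gaussianReal 0 1) (Set.Ici y)).toReal := by
  have hmap : (gaussianReal 0 1).map (fun u : ℝ => -u) = gaussianReal 0 1 := by
    have h0 : (fun u : ℝ => -u) = ((-1 : ℝ) * ·) := by funext u; ring
    have h2 : (⟨(-1:ℝ)^2, sq_nonneg _⟩ : ℝ≥0) * 1 = 1 := by ext; norm_num
    rw [h0, gaussianReal_map_const_mul, mul_zero]
    exact congrArg _ h2
  have hpre : (fun u : ℝ => -u) ⁻¹' (Iic (-y)) = Ici y := by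
    ext u
    simp only [mem_preimage, mem_Iic, mem_Ici]
    constructor <;> intro h <;> linarith
  rw [Phi]
  conv_lhs => rw [← hmap]
  rw [Measure.map_apply measurable_neg measurableSet_Iic, hpre]

lemma aux_Phi_one_sub (y : ℝ) : Phi (-y) = 1 - Phi y := by
  rw [aux_Phi_neg]
  have hy : gaussianReal 0 1 {y} = 0 :=
    (gaussianReal_absolutelyContinuous 0 one_ne_zero) (Real.volume_singleton)
  have hIci : gaussianReal 0 1 (Ici y) = gaussianReal 0 1 (Ioi y) :=
    (measure_congr (Ioi_ae_eq_Ici' hy)).symm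
  have hcompl : gaussianReal 0 1 (Ioi y) = 1 - gaussianReal 0 1 (Iic y) := by
    rw [← Set.compl_Iic, measure_compl measurableSet_Iic (measure_ne_top _ _), measure_univ]
  rw [hIci, hcompl, Phi, ENNReal.toReal_sub_of_le prob_le_one ENNReal.one_ne_top,
    ENNReal.toReal_one]

lemma aux_Phi_surj {p : ℝ} (hp : p ∈ Set.Ioo (0:ℝ) 1) : ∃ x, Phi x = p := by
  obtain ⟨a, ha⟩ := (aux_Phi_tendsto_atBot.eventually (eventually_lt_nhds hp.1)).exists
  obtain ⟨b, hb⟩ := (aux_Phi_tendsto_atTop.eventually (eventually_gt_nhds hp.2)).exists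
  have hab : a ≤ b := by
    by_contra h
    push_neg at h
    exact absurd (aux_Phi_mono h.le) (by linarith)
  have := intermediate_value_Icc hab aux_Phi_continuous.continuousOn
  obtain ⟨x, _, hx⟩ := this ⟨ha.le, hb.le⟩
  exact ⟨x, hx⟩

lemma aux_Phi_phiInv {p : ℝ} (hp : p ∈ Set.Ioo (0:ℝ) 1) : Phi (PhiInv p) = p :=
  Function.invFun_eq (aux_Phi_surj hp)

lemma aux_PhiInv_one_sub {p : ℝ} (hp : p ∈ Set.Ioo (0:ℝ) 1) : PhiInv (1 - p) = - PhiInv p := by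
  have h1 : Phi (-(PhiInv p)) = 1 - p := by rw [aux_Phi_one_sub, aux_Phi_phiInv hp]
  have h2 : PhiInv (1 - p) = PhiInv (Phi (-(PhiInv p))) := by rw [h1]
  rw [h2, PhiInv, Function.leftInverse_invFun aux_Phi_strictMono.injective]

lemma aux_gaussian_affine (m : ℝ) (v : ℝ≥0) (hv : v ≠ 0) :
    Measure.map (fun u : ℝ => √(v:ℝ) * u + m) (gaussianReal 0 1) = gaussianReal m v := by
  have hcomp : (fun u : ℝ => √(v:ℝ) * u + m) = ((· + m) ∘ (√(v:ℝ) * ·)) := rfl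
  rw [hcomp, ← Measure.map_map (measurable_add_const m) (measurable_const_mul _),
    gaussianReal_map_const_mul]
  have h2 : (⟨(√(v:ℝ))^2, sq_nonneg _⟩ : ℝ≥0) * 1 = v := by
    ext
    simp [Real.sq_sqrt (v.coe_nonneg)]
  rw [mul_zero, gaussianReal_map_add_const, zero_add]
  exact congrArg _ h2

lemma aux_gaussian_Ici (m r : ℝ) (v : ℝ≥0) (hv : v ≠ 0) :
    ((gaussianReal m v) (Ici r)).toReal = Phi ((m - r) / √(v:ℝ)) := by
  have hvpos : (0:ℝ) < v := by positivity
  have hsv : (0:ℝ) < √(v:ℝ) := Real.sqrt_pos.mpr hvpos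
  rw [← aux_gaussian_affine m v hv,
    Measure.map_apply ((measurable_const_mul _).add_const m) measurableSet_Ici]
  have hpre : (fun u : ℝ => √(v:ℝ) * u + m) ⁻¹' Ici r = Ici ((r - m) / √(v:ℝ)) := by
    ext u
    simp only [mem_preimage, mem_Ici]
    rw [div_le_iff₀ hsv, mul_comm]
    constructor <;> intro <;> linarith
  rw [hpre, show (m - r) / √(v:ℝ) = -((r - m) / √(v:ℝ)) by ring, aux_Phi_neg]

theorem gaussian_halfspace_prob_Y_ge
    {d : ℕ} (x μ δ σ : Fin d → ℝ) (hσ : ∀ i, 0 < σ i) (hδ : δ ≠ 0)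
    (p : ℝ) (hp : p ∈ Set.Ioo (0 : ℝ) 1)
    (μY : Measure (Fin d → ℝ))
    (hμY : μY = Measure.pi fun i : Fin d => gaussianReal (x i + μ i + δ i) ((σ i ^ 2).toNNReal)) :
    (μY {z | ∑ i, δ i / σ i ^ 2 * (z i - μ i - x i) ≥
        Real.sqrt (∑ i, δ i ^ 2 / σ i ^ 2) * PhiInv (1 - p)}).toReal =
      Phi (PhiInv p + Real.sqrt (∑ i, δ i ^ 2 / σ i ^ 2)) := by
  set c : Fin d → ℝ := fun i => δ i / σ i ^ 2 with hc
  set s2 : ℝ := ∑ i, δ i ^ 2 / σ i ^ 2 with hs2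
  set S : ℝ := Real.sqrt s2 with hS
  have hs2pos : 0 < s2 := by
    rw [hs2]
    obtain ⟨i0, hi0⟩ := Function.ne_iff.mp hδ
    refine Finset.sum_pos' (fun i _ => by positivity) ⟨i0, Finset.mem_univ _, ?_⟩
    have h1 := (hσ i0).ne'
    have h2 : δ i0 ≠ 0 := by simpa using hi0
    positivity
  have hSpos : 0 < S := Real.sqrt_pos.mpr hs2pos
  set A : ℝ := ∑ i, c i * (μ i + x i) with hA
  set r0 : ℝ := S * PhiInv (1 - p) + A with hr0
  have hsum_eq : ∀ z : Fin d → ℝ,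
      ∑ i, δ i / σ i ^ 2 * (z i - μ i - x i) = (∑ i, c i * z i) - A := by
    intro z
    rw [hA, ← Finset.sum_sub_distrib]
    exact Finset.sum_congr rfl fun i _ => by rw [hc]; ring
  have hset : {z : Fin d → ℝ | ∑ i, δ i / σ i ^ 2 * (z i - μ i - x i) ≥ S * PhiInv (1 - p)}
      = (fun z : Fin d → ℝ => ∑ i, c i * z i) ⁻¹' Ici r0 := by
    ext z
    simp only [mem_setOf_eq, mem_preimage, mem_Ici, ge_iff_le, hsum_eq z, hr0]
    constructor <;> intro <;> linarith
  have hAm : Measurable fun z : Fin d → ℝ => ∑ i, c i * z i :=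
    Finset.measurable_sum _ fun i _ => (measurable_pi_apply i).const_mul _
  rw [hμY, hset, ← Measure.map_apply hAm measurableSet_Ici,
    aux_map_weighted_sum d c (fun i => x i + μ i + δ i) (fun i => (σ i ^ 2).toNNReal)]
  set V : ℝ≥0 := ∑ i, ((c i)^2).toNNReal * ((σ i) ^ 2).toNNReal with hV
  have hVcoe : (V : ℝ) = s2 := by
    rw [hV, NNReal.coe_sum, hs2]
    refine Finset.sum_congr rfl fun i _ => ?_
    rw [NNReal.coe_mul, Real.coe_toNNReal _ (sq_nonneg _), Real.coe_toNNReal _ (sq_nonneg _), hc]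
    have := (hσ i).ne'
    field_simp
  have hVne : V ≠ 0 := by
    intro h0
    rw [h0] at hVcoe
    simp at hVcoe
    linarith
  set M : ℝ := ∑ i, c i * (x i + μ i + δ i) with hM
  have hMeq : M = A + s2 := by
    rw [hM, hA, hs2, ← Finset.sum_add_distrib]
    refine Finset.sum_congr rfl fun i _ => ?_
    rw [hc]
    have := (hσ i).ne'
    field_simp
    ring
  rw [aux_gaussian_Ici M r0 V hVne, hVcoe]
  have harg : (M - r0) / √s2 = PhiInv p + S := by
    rw [hMeq, hr0, aux_PhiInv_one_sub hp, ← hS]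
    have hSne : S ≠ 0 := hSpos.ne'
    have hdiv : s2 / S = S := by rw [hS]; exact Real.div_sqrt
    field_simp
    nlinarith [Real.sq_sqrt hs2pos.le, hdiv]
  rw [harg]
end
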